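/- Let μ be an ε-product probability measure on V = V₁×⋯×V_k, let f : V → ℝ, let S ⊆ [k], and set g = f^{=S}. Then: (1) for every T ⊆ [k] with T ≠ S, ‖g^{=T}‖₂² ≤ 2^{8k}·ε²·‖f‖₂²; and (2) ‖g^{=S} − g‖₂² ≤ 2^{10k}·ε²·‖f‖₂². -/

import Mathlib

open Finset

namespace GLL
set_option linter.unusedSectionVars false
set_option linter.unusedVariables false
set_option maxHeartbeats 1000000

variable {k : ℕ} {V : Fin k → Type} [∀ i, Fintype (V i)] [∀ i, DecidableEq (V i)]

/-- Expectation of `f` with respect to the (finitely supported) measure `μ`. -/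
def expect (μ f : (∀ i, V i) → ℝ) : ℝ := ∑ x, μ x * f x

/-- `μ` is a probability measure. -/
def IsProb (μ : (∀ i, V i) → ℝ) : Prop := (∀ x, 0 ≤ μ x) ∧ ∑ x, μ x = 1

/-- The marginal `μ_S` evaluated at (the `S`-coordinates of) `x`. -/
def marg (μ : (∀ i, V i) → ℝ) (S : Finset (Fin k)) (x : ∀ i, V i) : ℝ :=
  ∑ z, if ∀ i ∈ S, z i = x i then μ z else 0

/-- The link (conditional) measure `μ_x` for `x ∈ V_S`, viewed as a measure on
full points agreeing with `x` on `S`. -/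
noncomputable def cond (μ : (∀ i, V i) → ℝ) (S : Finset (Fin k)) (x z : ∀ i, V i) : ℝ :=
  if ∀ i ∈ S, z i = x i then μ z / marg μ S x else 0

/-- The averaging operator `A_S`: `A_S f (x) = E_{y ∼ μ_{x_S}} [f(x_S, y)]`.
Applied to an `S'`-junta `f`, this is also the operator `A_{S',S}`. -/
noncomputable def Aop (μ : (∀ i, V i) → ℝ) (S : Finset (Fin k)) (f : (∀ i, V i) → ℝ)
    (x : ∀ i, V i) : ℝ :=
  ∑ z, cond μ S x z * f z

/-- The Efron–Stein component `f^{=S} = ∑_{T ⊆ S} (-1)^{|S∖T|} A_T f`. -/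
noncomputable def ES (μ : (∀ i, V i) → ℝ) (S : Finset (Fin k)) (f : (∀ i, V i) → ℝ)
    (x : ∀ i, V i) : ℝ :=
  ∑ T ∈ S.powerset, (-1 : ℝ) ^ (S.card - T.card) * Aop μ T f x

/-- The low-degree part `f^{≤ d} = ∑_{|S| ≤ d} f^{=S}`. -/
noncomputable def lowPart (μ : (∀ i, V i) → ℝ) (d : ℕ) (f : (∀ i, V i) → ℝ)
    (x : ∀ i, V i) : ℝ :=
  ∑ S ∈ univ.powerset.filter (fun S : Finset (Fin k) => S.card ≤ d), ES μ S f x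

/-- The Laplacian `L_S[f] = ∑_{T ⊇ S} f^{=T}`. -/
noncomputable def Lap (μ : (∀ i, V i) → ℝ) (S : Finset (Fin k)) (f : (∀ i, V i) → ℝ)
    (x : ∀ i, V i) : ℝ :=
  ∑ T ∈ univ.powerset.filter (fun T : Finset (Fin k) => S ⊆ T), ES μ T f x

/-- The truncated Laplacian `L_S^{≤d}[f] = ∑_{T ⊇ S, |T| ≤ d} f^{=T}`. -/
noncomputable def LapLe (μ : (∀ i, V i) → ℝ) (d : ℕ) (S : Finset (Fin k))
    (f : (∀ i, V i) → ℝ) (x : ∀ i, V i) : ℝ :=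
  ∑ T ∈ univ.powerset.filter (fun T : Finset (Fin k) => S ⊆ T ∧ T.card ≤ d), ES μ T f x

/-- The influence `I_{S,x}[f] = ‖L_S[f](x,·)‖²_{L²(μ_x)}`. -/
noncomputable def Inf (μ : (∀ i, V i) → ℝ) (S : Finset (Fin k)) (f : (∀ i, V i) → ℝ)
    (x : ∀ i, V i) : ℝ :=
  ∑ z, cond μ S x z * (Lap μ S f z) ^ 2

/-- The truncated influence `I^{≤d}_{S,x}[f] = ‖L_S^{≤d}[f](x,·)‖²_{L²(μ_x)}`. -/
noncomputable def InfLe (μ : (∀ i, V i) → ℝ) (d : ℕ) (S : Finset (Fin k))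
    (f : (∀ i, V i) → ℝ) (x : ∀ i, V i) : ℝ :=
  ∑ z, cond μ S x z * (LapLe μ d S f z) ^ 2

/-- `‖f‖₂²` with respect to `μ`. -/
def normSq (μ f : (∀ i, V i) → ℝ) : ℝ := ∑ x, μ x * (f x) ^ 2

/-- `‖f‖₄⁴` with respect to `μ`. -/
def norm4p4 (μ f : (∀ i, V i) → ℝ) : ℝ := ∑ x, μ x * (f x) ^ 4

/-- `‖f‖₂` with respect to `μ`. -/
noncomputable def l2norm (μ f : (∀ i, V i) → ℝ) : ℝ := Real.sqrt (normSq μ f)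

/-- `‖f‖_∞`: the maximum of `|f|` over the support of `μ`. -/
noncomputable def supNorm (μ f : (∀ i, V i) → ℝ) : ℝ :=
  sSup ((fun x => |f x|) '' {x | 0 < μ x})

/-- Inner product `⟨f, g⟩ = E_{x∼μ}[f(x) g(x)]`. -/
def inner' (μ f g : (∀ i, V i) → ℝ) : ℝ := ∑ x, μ x * (f x * g x)

/-- The pair `{i,j}`-skeleton of `μ` is `ε`-pseudorandom. -/
def PairPseudo (μ : (∀ i, V i) → ℝ) (ε : ℝ) (i j : Fin k) : Prop :=
  ∀ (f₁ : V i → ℝ) (f₂ : V j → ℝ),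
    |expect μ (fun x => f₁ (x i) * f₂ (x j)) -
        expect μ (fun x => f₁ (x i)) * expect μ (fun x => f₂ (x j))| ≤
      ε * Real.sqrt
        ((expect μ (fun x => f₁ (x i) ^ 2) - expect μ (fun x => f₁ (x i)) ^ 2) *
          (expect μ (fun x => f₂ (x j) ^ 2) - expect μ (fun x => f₂ (x j)) ^ 2))

/-- `μ` is an `ε`-product measure: every link of every restriction of size `≤ k - 2`
has `ε`-pseudorandom skeletons. -/
def EpsProduct (μ : (∀ i, V i) → ℝ) (ε : ℝ) : Prop :=
  ∀ S : Finset (Fin k), S.card ≤ k - 2 → ∀ x, 0 < marg μ S x →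
    ∀ i j : Fin k, i ∉ S → j ∉ S → i ≠ j → PairPseudo (cond μ S x) ε i j

/-- `‖f(x,·)‖_{L²(μ_x)}` for `x ∈ V_S`. -/
noncomputable def restrictNorm (μ : (∀ i, V i) → ℝ) (S : Finset (Fin k)) (x : ∀ i, V i)
    (f : (∀ i, V i) → ℝ) : ℝ :=
  Real.sqrt (∑ z, cond μ S x z * (f z) ^ 2)

/-- `f` is `(d, δ)`-global: all restrictions of at most `d` coordinates have
`2`-norm at most `δ`. -/
def IsGlobal (μ : (∀ i, V i) → ℝ) (d : ℕ) (δ : ℝ) (f : (∀ i, V i) → ℝ) : Prop :=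
  ∀ S : Finset (Fin k), S.card ≤ d → ∀ x, 0 < marg μ S x → restrictNorm μ S x f ≤ δ

/-- `f` is an `S`-junta: it depends only on the coordinates in `S`. -/
def Junta (S : Finset (Fin k)) (f : (∀ i, V i) → ℝ) : Prop :=
  ∀ x y, (∀ i ∈ S, x i = y i) → f x = f y

/-- The noise operator `T_ρ f = ∑_{S ⊆ [k]} ρ^{|S|} (1-ρ)^{k-|S|} A_S f`. -/
noncomputable def noiseOp (μ : (∀ i, V i) → ℝ) (ρ : ℝ) (f : (∀ i, V i) → ℝ)
    (x : ∀ i, V i) : ℝ :=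
  ∑ S ∈ (univ : Finset (Fin k)).powerset, ρ ^ S.card * (1 - ρ) ^ (k - S.card) * Aop μ S f x

/-- The up-down walk operator `T = (1/k) ∑_{i=1}^k A_{[k]∖{i}}`. -/
noncomputable def upDown (μ : (∀ i, V i) → ℝ) (f : (∀ i, V i) → ℝ) (x : ∀ i, V i) : ℝ :=
  (1 / (k : ℝ)) * ∑ i : Fin k, Aop μ (univ.erase i) f x

/-- The product measure `μ₁ ⊗ ⋯ ⊗ μ_k`. -/
def prodMeasure (μi : ∀ i, V i → ℝ) : (∀ i, V i) → ℝ := fun x => ∏ i, μi i (x i)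

/-- `f` has degree at most `d`: `f^{=S} = 0` whenever `|S| > d`. -/
def DegLe (μ : (∀ i, V i) → ℝ) (d : ℕ) (f : (∀ i, V i) → ℝ) : Prop :=
  ∀ S : Finset (Fin k), d < S.card → ∀ x, ES μ S f x = 0

/-- `{F S}_{S ⊆ [k]}` is an `(α, ε')`-approximate Efron–Stein decomposition of `f`. -/
noncomputable def ApproxES (μ : (∀ i, V i) → ℝ) (α ε' : ℝ) (f : (∀ i, V i) → ℝ)
    (F : Finset (Fin k) → (∀ i, V i) → ℝ) : Prop :=
  l2norm μ f ≤ α ∧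
    l2norm μ (fun x => f x - ∑ S ∈ (univ : Finset (Fin k)).powerset, F S x) ≤ ε' ∧
    ∀ S : Finset (Fin k), ∃ h : (∀ i, V i) → ℝ,
      l2norm μ h ≤ α ∧ l2norm μ (fun x => ES μ S h x - F S x) ≤ ε'

/-! ### Auxiliary definitions -/

/-- Variance with respect to `ν`. -/
noncomputable def vari (ν f : (∀ i, V i) → ℝ) : ℝ :=
  expect ν (fun x => f x ^ 2) - (expect ν f) ^ 2

/-- Standard deviation with respect to `ν`. -/
noncomputable def sd (ν f : (∀ i, V i) → ℝ) : ℝ := Real.sqrt (vari ν f)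

/-- Covariance with respect to `ν`. -/
noncomputable def cova (ν f g : (∀ i, V i) → ℝ) : ℝ :=
  expect ν (fun x => f x * g x) - expect ν f * expect ν g

/-! ### Basic lemmas -/

lemma marg_nonneg {ν : (∀ i, V i) → ℝ} (hν : ∀ x, 0 ≤ ν x) (R : Finset (Fin k))
    (x : ∀ i, V i) : 0 ≤ marg ν R x := by
  refine Finset.sum_nonneg fun z _ => ?_
  split <;> [exact hν z; exact le_rfl]

lemma self_le_marg {ν : (∀ i, V i) → ℝ} (hν : ∀ x, 0 ≤ ν x) (R : Finset (Fin k))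
    (x : ∀ i, V i) : ν x ≤ marg ν R x := by
  have := Finset.single_le_sum (f := fun z => if ∀ i ∈ R, z i = x i then ν z else 0)
    (fun z _ => by split <;> [exact hν z; exact le_rfl]) (Finset.mem_univ x)
  simpa [marg] using this

lemma marg_pos {ν : (∀ i, V i) → ℝ} (hν : ∀ x, 0 ≤ ν x) {x : ∀ i, V i}
    (hx : 0 < ν x) (R : Finset (Fin k)) : 0 < marg ν R x :=
  lt_of_lt_of_le hx (self_le_marg hν R x)

lemma cond_nonneg {ν : (∀ i, V i) → ℝ} (hν : ∀ x, 0 ≤ ν x) (R : Finset (Fin k))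
    (x z : ∀ i, V i) : 0 ≤ cond ν R x z := by
  unfold cond; split
  · exact div_nonneg (hν z) (marg_nonneg hν R x)
  · exact le_rfl

lemma cond_ne_zero {ν : (∀ i, V i) → ℝ} {R : Finset (Fin k)} {x z : ∀ i, V i}
    (h : cond ν R x z ≠ 0) : ν z ≠ 0 ∧ ∀ i ∈ R, z i = x i := by
  unfold cond at h
  split at h
  · exact ⟨fun h0 => h (by simp [h0]), by assumption⟩
  · exact absurd rfl h

lemma marg_congr {ν : (∀ i, V i) → ℝ} {R : Finset (Fin k)} {x y : ∀ i, V i}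
    (hxy : ∀ i ∈ R, x i = y i) : marg ν R x = marg ν R y := by
  unfold marg
  refine Finset.sum_congr rfl fun z _ => ?_
  have : (∀ i ∈ R, z i = x i) ↔ (∀ i ∈ R, z i = y i) :=
    ⟨fun h i hi => (h i hi).trans (hxy i hi), fun h i hi => (h i hi).trans (hxy i hi).symm⟩
  simp only [this]

lemma cond_congr {ν : (∀ i, V i) → ℝ} {R : Finset (Fin k)} {x y : ∀ i, V i}
    (hxy : ∀ i ∈ R, x i = y i) : cond ν R x = cond ν R y := by
  funext z
  unfold cond
  rw [marg_congr (ν := ν) hxy]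
  have : (∀ i ∈ R, z i = x i) ↔ (∀ i ∈ R, z i = y i) :=
    ⟨fun h i hi => (h i hi).trans (hxy i hi), fun h i hi => (h i hi).trans (hxy i hi).symm⟩
  simp only [this]

lemma sum_cond {ν : (∀ i, V i) → ℝ} {R : Finset (Fin k)} {x : ∀ i, V i}
    (hM : marg ν R x ≠ 0) : ∑ z, cond ν R x z = 1 := by
  unfold cond
  rw [show (∑ z, if ∀ i ∈ R, z i = x i then ν z / marg ν R x else 0)
      = (∑ z, if ∀ i ∈ R, z i = x i then ν z else 0) / marg ν R x by
    rw [Finset.sum_div]; exact Finset.sum_congr rfl fun z _ => by split <;> simp]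
  exact div_self hM

lemma cond_eq_zero_fun {ν : (∀ i, V i) → ℝ} {R : Finset (Fin k)} {x : ∀ i, V i}
    (hM : marg ν R x = 0) : cond ν R x = fun _ => 0 := by
  funext z; unfold cond; rw [hM]; split <;> simp

lemma Aop_expect (ν : (∀ i, V i) → ℝ) (R : Finset (Fin k)) (f : (∀ i, V i) → ℝ)
    (x : ∀ i, V i) : Aop ν R f x = expect (cond ν R x) f := rfl

/-- `Aop ν S f` is an `S`-junta. -/
lemma Aop_junta (ν : (∀ i, V i) → ℝ) (S : Finset (Fin k)) (f : (∀ i, V i) → ℝ) :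
    Junta S (Aop ν S f) := by
  intro x y hxy
  unfold Aop
  rw [cond_congr (ν := ν) (fun i hi => (hxy i hi).symm)]

/-- detailed symmetry of the two-variable kernel. -/
lemma nu_mul_cond_symm {ν : (∀ i, V i) → ℝ} (R : Finset (Fin k)) (x z : ∀ i, V i) :
    ν x * cond ν R x z = ν z * cond ν R z x := by
  unfold cond
  by_cases h : ∀ i ∈ R, z i = x i
  · have h' : ∀ i ∈ R, x i = z i := fun i hi => (h i hi).symm
    rw [if_pos h, if_pos h', marg_congr (ν := ν) h']
    ring
  · have h' : ¬ ∀ i ∈ R, x i = z i := fun hc => h fun i hi => (hc i hi).symm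
    rw [if_neg h, if_neg h']; ring

/-- Weighted Cauchy–Schwarz. -/
lemma weighted_CS {w a b : (∀ i, V i) → ℝ} (hw : ∀ x, 0 ≤ w x) :
    (∑ x, w x * (a x * b x)) ^ 2 ≤ (∑ x, w x * a x ^ 2) * (∑ x, w x * b x ^ 2) := by
  have h := Finset.sum_mul_sq_le_sq_mul_sq Finset.univ
    (fun x => Real.sqrt (w x) * a x) (fun x => Real.sqrt (w x) * b x)
  have e1 : ∀ x : ∀ i, V i, (Real.sqrt (w x) * a x) * (Real.sqrt (w x) * b x)
      = w x * (a x * b x) := by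
    intro x
    rw [mul_mul_mul_comm, Real.mul_self_sqrt (hw x)]
  have e2 : ∀ x : ∀ i, V i, (Real.sqrt (w x) * a x) ^ 2 = w x * a x ^ 2 := by
    intro x; rw [mul_pow, Real.sq_sqrt (hw x)]
  have e3 : ∀ x : ∀ i, V i, (Real.sqrt (w x) * b x) ^ 2 = w x * b x ^ 2 := by
    intro x; rw [mul_pow, Real.sq_sqrt (hw x)]
  simp only [e1, e2, e3] at h
  exact h

lemma weighted_CS_abs {w a b : (∀ i, V i) → ℝ} (hw : ∀ x, 0 ≤ w x) :
    |∑ x, w x * (a x * b x)| ≤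
      Real.sqrt (∑ x, w x * a x ^ 2) * Real.sqrt (∑ x, w x * b x ^ 2) := by
  have hA : (0:ℝ) ≤ ∑ x, w x * a x ^ 2 :=
    Finset.sum_nonneg fun x _ => mul_nonneg (hw x) (sq_nonneg _)
  have hB : (0:ℝ) ≤ ∑ x, w x * b x ^ 2 :=
    Finset.sum_nonneg fun x _ => mul_nonneg (hw x) (sq_nonneg _)
  have h := weighted_CS (a := a) (b := b) hw
  have := Real.sqrt_le_sqrt h
  rwa [Real.sqrt_sq_eq_abs, Real.sqrt_mul hA] at this

lemma expect_congr_support {ν f g : (∀ i, V i) → ℝ}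
    (h : ∀ x, ν x ≠ 0 → f x = g x) : expect ν f = expect ν g := by
  unfold expect
  refine Finset.sum_congr rfl fun x _ => ?_
  by_cases hx : ν x = 0
  · rw [hx]; ring
  · rw [h x hx]

lemma cova_congr_support {ν f f' g g' : (∀ i, V i) → ℝ}
    (hf : ∀ x, ν x ≠ 0 → f x = f' x) (hg : ∀ x, ν x ≠ 0 → g x = g' x) :
    cova ν f g = cova ν f' g' := by
  unfold cova
  rw [expect_congr_support hf, expect_congr_support hg,
    expect_congr_support (g := fun x => f' x * g' x)
      (fun x hx => by rw [hf x hx, hg x hx])]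

lemma vari_congr_support {ν f f' : (∀ i, V i) → ℝ}
    (hf : ∀ x, ν x ≠ 0 → f x = f' x) : vari ν f = vari ν f' := by
  unfold vari
  rw [expect_congr_support hf,
    expect_congr_support (g := fun x => f' x ^ 2) (fun x hx => by rw [hf x hx])]

/-- Key adjointness: averaging against a junta. -/
lemma nu_mul_sum_cond_junta {ν h : (∀ i, V i) → ℝ} (hν : ∀ x, 0 ≤ ν x)
    {R : Finset (Fin k)} (hh : Junta R h) (z : ∀ i, V i) :
    ν z * (∑ x, cond ν R z x * h x) = ν z * h z := by
  by_cases hz : ν z = 0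
  · rw [hz]; ring
  · have hM : marg ν R z ≠ 0 :=
      ne_of_gt (marg_pos hν (lt_of_le_of_ne (hν z) (Ne.symm hz)) R)
    have : ∑ x, cond ν R z x * h x = ∑ x, cond ν R z x * h z := by
      refine Finset.sum_congr rfl fun x _ => ?_
      by_cases hc : cond ν R z x = 0
      · rw [hc]; ring
      · rw [hh x z (fun i hi => (cond_ne_zero hc).2 i hi)]
    rw [this, ← Finset.sum_mul, sum_cond hM, one_mul]

/-- Self-adjointness of `Aop` tested against a junta. -/
lemma sum_Aop_mul_junta {ν h : (∀ i, V i) → ℝ} (hν : ∀ x, 0 ≤ ν x)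
    {R : Finset (Fin k)} (hh : Junta R h) (f : (∀ i, V i) → ℝ) :
    ∑ x, ν x * (Aop ν R f x * h x) = ∑ x, ν x * (f x * h x) := by
  have step1 : ∑ x, ν x * (Aop ν R f x * h x)
      = ∑ x, ∑ z, (ν x * cond ν R x z) * (f z * h x) := by
    refine Finset.sum_congr rfl fun x _ => ?_
    unfold Aop
    rw [Finset.sum_mul, Finset.mul_sum]
    refine Finset.sum_congr rfl fun z _ => by ring
  rw [step1]
  have step2 : ∑ x, ∑ z, (ν x * cond ν R x z) * (f z * h x)
      = ∑ z, ν z * (f z * (∑ x, cond ν R z x * h x)) := by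
    rw [Finset.sum_comm]
    refine Finset.sum_congr rfl fun z _ => ?_
    have e : ∑ x, (ν x * cond ν R x z) * (f z * h x)
        = (f z * ν z) * ∑ x, cond ν R z x * h x := by
      rw [Finset.mul_sum]
      refine Finset.sum_congr rfl fun x _ => ?_
      rw [nu_mul_cond_symm]
      ring
    rw [e]; ring
  rw [step2]
  refine Finset.sum_congr rfl fun z _ => ?_
  have := nu_mul_sum_cond_junta hν hh z
  calc ν z * (f z * (∑ x, cond ν R z x * h x))
      = f z * (ν z * (∑ x, cond ν R z x * h x)) := by ring
    _ = f z * (ν z * h z) := by rw [this]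
    _ = ν z * (f z * h z) := by ring

lemma expect_Aop {ν : (∀ i, V i) → ℝ} (hν : ∀ x, 0 ≤ ν x) (R : Finset (Fin k))
    (f : (∀ i, V i) → ℝ) : expect ν (fun x => Aop ν R f x) = expect ν f := by
  have := sum_Aop_mul_junta hν (h := fun _ => (1:ℝ)) (R := R) (fun _ _ _ => rfl) f
  unfold expect
  simpa using this

/-- Contraction: `‖A_R f‖₂ ≤ ‖f‖₂`. -/
lemma Aop_sq_le {ν : (∀ i, V i) → ℝ} (hν : ∀ x, 0 ≤ ν x) (R : Finset (Fin k))
    (f : (∀ i, V i) → ℝ) :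
    ∑ x, ν x * (Aop ν R f x) ^ 2 ≤ ∑ x, ν x * f x ^ 2 := by
  set A := ∑ x, ν x * (Aop ν R f x) ^ 2 with hA
  set B := ∑ x, ν x * f x ^ 2 with hB
  have hA0 : 0 ≤ A := Finset.sum_nonneg fun x _ => mul_nonneg (hν x) (sq_nonneg _)
  have hB0 : 0 ≤ B := Finset.sum_nonneg fun x _ => mul_nonneg (hν x) (sq_nonneg _)
  have key : A = ∑ x, ν x * (f x * Aop ν R f x) := by
    rw [hA]
    rw [← sum_Aop_mul_junta hν (Aop_junta ν R f) f]
    refine Finset.sum_congr rfl fun x _ => by ring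
  have hcs : A ^ 2 ≤ B * A := by
    calc A ^ 2 = (∑ x, ν x * (f x * Aop ν R f x)) ^ 2 := by rw [← key]
      _ ≤ B * A := by
          have := weighted_CS (w := ν) (a := f) (b := fun x => Aop ν R f x) hν
          exact this
  nlinarith [hA0, hB0, hcs]

lemma vari_nonneg {ν : (∀ i, V i) → ℝ} (hν : ∀ x, 0 ≤ ν x)
    (hsum : ∑ x, ν x ≤ 1) (f : (∀ i, V i) → ℝ) : 0 ≤ vari ν f := by
  unfold vari expect
  have h := weighted_CS (w := ν) (a := f) (b := fun _ => (1:ℝ)) hν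
  simp only [mul_one, one_pow] at h
  have hf2 : (0:ℝ) ≤ ∑ x, ν x * f x ^ 2 :=
    Finset.sum_nonneg fun x _ => mul_nonneg (hν x) (sq_nonneg _)
  nlinarith [h, hf2, hsum]

lemma sum_cond_le_one {μ : (∀ i, V i) → ℝ} (hμ : ∀ x, 0 ≤ μ x) (R : Finset (Fin k))
    (x : ∀ i, V i) : ∑ z, cond μ R x z ≤ 1 := by
  by_cases hM : marg μ R x = 0
  · rw [cond_eq_zero_fun hM]; simp
  · rw [sum_cond hM]

lemma vari_cond_nonneg {μ : (∀ i, V i) → ℝ} (hμ : ∀ x, 0 ≤ μ x) (R : Finset (Fin k))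
    (x : ∀ i, V i) (f : (∀ i, V i) → ℝ) : 0 ≤ vari (cond μ R x) f :=
  vari_nonneg (cond_nonneg hμ R x) (sum_cond_le_one hμ R x) f

lemma sd_nonneg (ν f : (∀ i, V i) → ℝ) : 0 ≤ sd ν f := Real.sqrt_nonneg _

lemma sd_sq {ν f : (∀ i, V i) → ℝ} (h : 0 ≤ vari ν f) : sd ν f ^ 2 = vari ν f :=
  Real.sq_sqrt h

/-- Covariance is bounded by the product of standard deviations. -/
lemma abs_cova_le {ν : (∀ i, V i) → ℝ} (hν : ∀ x, 0 ≤ ν x)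
    (hsum : ∑ x, ν x = 1) (f g : (∀ i, V i) → ℝ) :
    |cova ν f g| ≤ sd ν f * sd ν g := by
  have hcent : ∀ (a : (∀ i, V i) → ℝ),
      ∑ x, ν x * (a x - expect ν a) ^ 2 = vari ν a := by
    intro a
    unfold vari expect
    have : ∀ x : ∀ i, V i, ν x * (a x - ∑ y, ν y * a y) ^ 2
        = ν x * a x ^ 2 - 2 * (∑ y, ν y * a y) * (ν x * a x)
          + (∑ y, ν y * a y) ^ 2 * ν x := fun x => by ring
    simp only [this]
    rw [Finset.sum_add_distrib, Finset.sum_sub_distrib, ← Finset.mul_sum, ← Finset.mul_sum,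
      hsum]
    ring
  have hcov : cova ν f g = ∑ x, ν x * ((f x - expect ν f) * (g x - expect ν g)) := by
    unfold cova expect
    have : ∀ x : ∀ i, V i, ν x * ((f x - ∑ y, ν y * f y) * (g x - ∑ y, ν y * g y))
        = ν x * (f x * g x) - (∑ y, ν y * f y) * (ν x * g x)
          - (∑ y, ν y * g y) * (ν x * f x)
          + (∑ y, ν y * f y) * (∑ y, ν y * g y) * ν x := fun x => by ring
    simp only [this]
    rw [Finset.sum_add_distrib, Finset.sum_sub_distrib, Finset.sum_sub_distrib,
      ← Finset.mul_sum, ← Finset.mul_sum, ← Finset.mul_sum, hsum]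
    ring
  rw [hcov]
  have := weighted_CS_abs (w := ν) (a := fun x => f x - expect ν f)
    (b := fun x => g x - expect ν g) hν
  unfold sd
  rwa [hcent f, hcent g] at this

lemma nu_eq_zero_of_marg {ν : (∀ i, V i) → ℝ} (hν : ∀ x, 0 ≤ ν x)
    {R : Finset (Fin k)} {x : ∀ i, V i} (hM : marg ν R x = 0) {z : ∀ i, V i}
    (hz : ∀ i ∈ R, z i = x i) : ν z = 0 := by
  have h := (Finset.sum_eq_zero_iff_of_nonneg
    (fun w (_ : w ∈ Finset.univ) => by
      split <;> [exact hν w; exact le_rfl])).1 hM z (Finset.mem_univ z)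
  have h2 : (if ∀ i ∈ R, z i = x i then ν z else 0) = 0 := h
  rwa [if_pos hz] at h2

/-- Link of a link is a link: `cond (cond ν R x) Q z = cond ν (R ∪ Q) z`. -/
lemma cond_cond {ν : (∀ i, V i) → ℝ} (hν : ∀ x, 0 ≤ ν x) {R Q : Finset (Fin k)}
    {x z : ∀ i, V i} (hz : ∀ i ∈ R, z i = x i) :
    cond (cond ν R x) Q z = cond ν (R ∪ Q) z := by
  have hcondiff : ∀ w : ∀ i, V i,
      (∀ i ∈ R ∪ Q, w i = z i) ↔ ((∀ i ∈ Q, w i = z i) ∧ (∀ i ∈ R, w i = x i)) := by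
    intro w
    rw [Finset.forall_mem_union]
    constructor
    · rintro ⟨h1, h2⟩
      exact ⟨h2, fun i hi => (h1 i hi).trans (hz i hi)⟩
    · rintro ⟨h1, h2⟩
      exact ⟨fun i hi => (h2 i hi).trans (hz i hi).symm, h1⟩
  set M := marg ν R x with hMdef
  have hmarg : marg (cond ν R x) Q z = marg ν (R ∪ Q) z / M := by
    unfold marg cond
    rw [Finset.sum_div]
    refine Finset.sum_congr rfl fun w _ => ?_
    by_cases hQ : ∀ i ∈ Q, w i = z i
    · by_cases hR : ∀ i ∈ R, w i = x i
      · rw [if_pos hQ, if_pos hR, if_pos ((hcondiff w).2 ⟨hQ, hR⟩)]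
      · rw [if_pos hQ, if_neg hR, if_neg (fun hc => hR ((hcondiff w).1 hc).2), zero_div]
    · rw [if_neg hQ, if_neg (fun hc => hQ ((hcondiff w).1 hc).1), zero_div]
  funext w
  show (if ∀ i ∈ Q, w i = z i then cond ν R x w / marg (cond ν R x) Q z else 0)
      = cond ν (R ∪ Q) z w
  rw [hmarg]
  unfold cond
  by_cases hQ : ∀ i ∈ Q, w i = z i
  · rw [if_pos hQ]
    by_cases hR : ∀ i ∈ R, w i = x i
    · rw [if_pos hR, if_pos ((hcondiff w).2 ⟨hQ, hR⟩)]
      by_cases hM : M = 0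
      · have hw0 : ν w = 0 := nu_eq_zero_of_marg hν (hMdef ▸ hM) hR
        simp [hw0, hM]
      · by_cases hU : marg ν (R ∪ Q) z = 0
        · have hw0 : ν w = 0 := nu_eq_zero_of_marg hν hU ((hcondiff w).2 ⟨hQ, hR⟩)
          simp [hw0]
        · field_simp; rw [← hMdef, mul_div_assoc, div_self hM, mul_one]
    · rw [if_neg hR, if_neg (fun hc => hR ((hcondiff w).1 hc).2), zero_div]
  · rw [if_neg hQ, if_neg (fun hc => hQ ((hcondiff w).1 hc).1)]

/-- Averaging over `T ⊇ R` is the same for `ν` and for its `R`-link. -/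
lemma Aop_cond {ν : (∀ i, V i) → ℝ} (hν : ∀ x, 0 ≤ ν x) {R T : Finset (Fin k)}
    (hRT : R ⊆ T) {x y : ∀ i, V i} (hy : ∀ i ∈ R, y i = x i) (f : (∀ i, V i) → ℝ) :
    Aop (cond ν R x) T f y = Aop ν T f y := by
  unfold Aop
  rw [show cond (cond ν R x) T y = cond ν (R ∪ T) y from cond_cond hν hy,
    Finset.union_eq_right.mpr hRT]

lemma Aop_congr_support {ν f f' : (∀ i, V i) → ℝ}
    (h : ∀ w, ν w ≠ 0 → f w = f' w) (hν : ∀ x, 0 ≤ ν x) (Q : Finset (Fin k))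
    (x : ∀ i, V i) : Aop ν Q f x = Aop ν Q f' x := by
  unfold Aop
  refine Finset.sum_congr rfl fun w _ => ?_
  by_cases hc : cond ν Q x w = 0
  · rw [hc]; ring
  · rw [h w (cond_ne_zero hc).1]

/-- Coordinates fixed on the support can be dropped from the averaging set. -/
lemma Aop_drop {ν' : (∀ i, V i) → ℝ} {R₁ : Finset (Fin k)} {x₁ : ∀ i, V i}
    (hsupp : ∀ w, ν' w ≠ 0 → ∀ i ∈ R₁, w i = x₁ i) {y : ∀ i, V i}
    (hy : ∀ i ∈ R₁, y i = x₁ i) (T : Finset (Fin k)) (f : (∀ i, V i) → ℝ) :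
    Aop ν' T f y = Aop ν' (T \ R₁) f y := by
  have hiff : ∀ w : ∀ i, V i, ν' w ≠ 0 →
      ((∀ i ∈ T, w i = y i) ↔ (∀ i ∈ T \ R₁, w i = y i)) := by
    intro w hw
    constructor
    · exact fun h i hi => h i (Finset.mem_sdiff.1 hi).1
    · intro h i hi
      by_cases hiR : i ∈ R₁
      · exact (hsupp w hw i hiR).trans (hy i hiR).symm
      · exact h i (Finset.mem_sdiff.2 ⟨hi, hiR⟩)
  have hmarg : marg ν' T y = marg ν' (T \ R₁) y := by
    unfold marg
    refine Finset.sum_congr rfl fun w _ => ?_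
    by_cases hw : ν' w = 0
    · split <;> split <;> simp [hw]
    · simp only [hiff w hw]
  unfold Aop cond
  rw [hmarg]
  refine Finset.sum_congr rfl fun w _ => ?_
  by_cases hw : ν' w = 0
  · split <;> split <;> simp [hw]
  · simp only [hiff w hw]

lemma Aop_empty {ν : (∀ i, V i) → ℝ} (hsum : ∑ x, ν x = 1) (f : (∀ i, V i) → ℝ)
    (z : ∀ i, V i) : Aop ν ∅ f z = expect ν f := by
  unfold Aop cond marg expect
  simp [hsum]

lemma Aop_univ {ν : (∀ i, V i) → ℝ} {x : ∀ i, V i} (hx : ν x ≠ 0)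
    (f : (∀ i, V i) → ℝ) : Aop ν Finset.univ f x = f x := by
  have hcond : ∀ z : ∀ i, V i, (∀ i ∈ Finset.univ, z i = x i) ↔ z = x := by
    intro z
    simp [funext_iff]
  have hmarg : marg ν Finset.univ x = ν x := by
    unfold marg
    simp only [hcond]
    simp
  unfold Aop cond
  rw [hmarg]
  simp only [hcond, ite_mul, zero_mul]
  rw [Finset.sum_ite_eq' Finset.univ x (fun z => ν z / ν x * f z)]
  simp [div_self hx]

lemma nonempty_of_prob {μ : (∀ i, V i) → ℝ} (hμ : IsProb μ) : Nonempty (∀ i, V i) := by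
  by_contra h
  have he : (Finset.univ : Finset (∀ i, V i)) = ∅ :=
    Finset.univ_eq_empty_iff.2 (not_nonempty_iff.mp h)
  have := hμ.2
  rw [he, Finset.sum_empty] at this
  norm_num at this

lemma marg_ne_zero_of_cond_ne_zero {μ : (∀ i, V i) → ℝ} (hμ : IsProb μ)
    {R : Finset (Fin k)} {x z : ∀ i, V i} (hz : cond μ R x z ≠ 0)
    (Q : Finset (Fin k)) : marg μ Q z ≠ 0 := by
  have hz1 := (cond_ne_zero hz).1
  have : 0 < μ z := lt_of_le_of_ne (hμ.1 z) (Ne.symm hz1)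
  exact ne_of_gt (marg_pos hμ.1 this Q)

lemma link_expect_eq {μ : (∀ i, V i) → ℝ} (hμ : IsProb μ) {R : Finset (Fin k)}
    {x : ∀ i, V i} (Q : Finset (Fin k)) (F : (∀ i, V i) → ℝ) (z : ∀ i, V i)
    (hz : cond μ R x z ≠ 0) :
    Aop (cond μ R x) Q F z = expect (cond μ (R ∪ Q) z) F := by
  rw [Aop_expect, cond_cond hμ.1 (cond_ne_zero hz).2]

/-- Law of total variance (inequality form). -/
lemma total_variance_le {μ : (∀ i, V i) → ℝ} (hμ : IsProb μ) {R : Finset (Fin k)}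
    {x : ∀ i, V i} (hM : marg μ R x ≠ 0) (j : Fin k) (h : (∀ i, V i) → ℝ) :
    ∑ z, cond μ R x z * vari (cond μ (R ∪ {j}) z) h ≤ vari (cond μ R x) h := by
  set ν := cond μ R x with hνdef
  have hν : ∀ w, 0 ≤ ν w := cond_nonneg hμ.1 R x
  have hνsum : ∑ w, ν w = 1 := sum_cond hM
  have hterm : ∀ z, ν z * vari (cond μ (R ∪ {j}) z) h
      = ν z * (Aop ν {j} (fun w => h w ^ 2) z - (Aop ν {j} h z) ^ 2) := by
    intro z
    by_cases hz : ν z = 0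
    · rw [hz]; ring
    · rw [link_expect_eq hμ {j} (fun w => h w ^ 2) z hz, link_expect_eq hμ {j} h z hz]
      rfl
  simp only [hterm]
  have e1 : ∑ z, ν z * (Aop ν {j} (fun w => h w ^ 2) z - (Aop ν {j} h z) ^ 2)
      = (∑ z, ν z * Aop ν {j} (fun w => h w ^ 2) z) - ∑ z, ν z * (Aop ν {j} h z) ^ 2 := by
    rw [← Finset.sum_sub_distrib]
    exact Finset.sum_congr rfl fun z _ => by ring
  rw [e1]
  have e2 : ∑ z, ν z * Aop ν {j} (fun w => h w ^ 2) z = expect ν (fun w => h w ^ 2) :=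
    expect_Aop hν {j} (fun w => h w ^ 2)
  rw [e2]
  unfold vari
  have e3 : (expect ν h) ^ 2 ≤ ∑ z, ν z * (Aop ν {j} h z) ^ 2 := by
    have hEA : expect ν h = expect ν (fun z => Aop ν {j} h z) := (expect_Aop hν {j} h).symm
    have hvn : 0 ≤ vari ν (fun z => Aop ν {j} h z) :=
      vari_nonneg hν (le_of_eq hνsum) _
    have hvn' : 0 ≤ (expect ν fun z => Aop ν {j} h z ^ 2)
        - (expect ν fun z => Aop ν {j} h z) ^ 2 := hvn
    have hthis : (expect ν fun z => Aop ν {j} h z ^ 2)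
        = ∑ z, ν z * (Aop ν {j} h z) ^ 2 := rfl
    rw [hEA, ← hthis]
    linarith [hvn']
  linarith

/-- `sd` of an average is at most `sd`. -/
lemma sd_Aop_le {ν : (∀ i, V i) → ℝ} (hν : ∀ x, 0 ≤ ν x) (hsum : ∑ x, ν x = 1)
    (Q : Finset (Fin k)) (g : (∀ i, V i) → ℝ) :
    sd ν (fun z => Aop ν Q g z) ≤ sd ν g := by
  apply Real.sqrt_le_sqrt
  unfold vari
  have h1 : expect ν (fun z => Aop ν Q g z) = expect ν g := expect_Aop hν Q g
  have h2 : expect ν (fun z => (Aop ν Q g z) ^ 2) ≤ expect ν (fun z => g z ^ 2) :=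
    Aop_sq_le hν Q g
  rw [h1]
  linarith

lemma quad_trick {a b : ℝ} (ha : 0 ≤ a) (hb : 0 ≤ b) (h : a * a ≤ b * a) : a ≤ b := by
  rcases eq_or_lt_of_le ha with h0 | h0
  · linarith
  · exact le_of_mul_le_mul_right (by linarith) h0

/-- Pseudorandom pair: averaging a single-coordinate junta over another coordinate
contracts by `ε`. -/
lemma sd_Aop_single {μ : (∀ i, V i) → ℝ} (hμ : IsProb μ) {ε : ℝ} (hε : 0 ≤ ε)
    (hprod : EpsProduct μ ε) {R : Finset (Fin k)} {x : ∀ i, V i}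
    (hM : marg μ R x ≠ 0) (hcard : R.card ≤ k - 2) {i j : Fin k} (hij : i ≠ j)
    (hiR : i ∉ R) (hjR : j ∉ R) {u : (∀ i, V i) → ℝ} (hu : Junta {i} u) :
    sd (cond μ R x) (fun z => Aop (cond μ R x) {j} u z) ≤ ε * sd (cond μ R x) u := by
  set ν := cond μ R x with hνdef
  have hν : ∀ w, 0 ≤ ν w := cond_nonneg hμ.1 R x
  have hνsum : ∑ w, ν w = 1 := sum_cond hM
  have hpos : 0 < marg μ R x := lt_of_le_of_ne (marg_nonneg hμ.1 R x) (Ne.symm hM)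
  have hPP : PairPseudo ν ε i j := hprod R hcard x hpos i j hiR hjR hij
  obtain ⟨x₀⟩ := nonempty_of_prob hμ
  set uA : (∀ l, V l) → ℝ := fun z => Aop ν {j} u z with huAdef
  have huAj : Junta {j} uA := Aop_junta ν {j} u
  set f₁ : V i → ℝ := fun a => u (Function.update x₀ i a) with hf₁def
  set f₂ : V j → ℝ := fun b => uA (Function.update x₀ j b) with hf₂def
  have hf₁ : ∀ w, f₁ (w i) = u w := by
    intro w
    exact hu (Function.update x₀ i (w i)) w
      (fun l hl => by rw [Finset.mem_singleton] at hl; subst hl; simp)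
  have hf₂ : ∀ w, f₂ (w j) = uA w := by
    intro w
    exact huAj (Function.update x₀ j (w j)) w
      (fun l hl => by rw [Finset.mem_singleton] at hl; subst hl; simp)
  have hPP' := hPP f₁ f₂
  have e1 : (fun w => f₁ (w i) * f₂ (w j)) = fun w => u w * uA w := by
    funext w; rw [hf₁ w, hf₂ w]
  have e2 : (fun w : ∀ l, V l => f₁ (w i)) = u := funext hf₁
  have e3 : (fun w : ∀ l, V l => f₂ (w j)) = uA := funext hf₂
  have e4 : (fun w : ∀ l, V l => f₁ (w i) ^ 2) = fun w => u w ^ 2 := by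
    funext w; rw [hf₁ w]
  have e5 : (fun w : ∀ l, V l => f₂ (w j) ^ 2) = fun w => uA w ^ 2 := by
    funext w; rw [hf₂ w]
  rw [e1, e2, e3, e4, e5] at hPP'
  -- `E[u·uA] = E[uA²]`
  have hadj : expect ν (fun w => u w * uA w) = expect ν (fun w => uA w ^ 2) := by
    have := sum_Aop_mul_junta hν (R := {j}) huAj u
    unfold expect
    rw [← this]
    refine Finset.sum_congr rfl fun w _ => ?_
    have : Aop ν {j} u w = uA w := rfl
    rw [this]; ring
  have hvar : vari ν uA ≤ ε * Real.sqrt (vari ν u * vari ν uA) := by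
    have : expect ν (fun w => u w * uA w) - expect ν u * expect ν uA = vari ν uA := by
      rw [hadj]
      unfold vari
      have h9 : expect ν uA = expect ν u := by
        have := expect_Aop hν {j} u
        exact this
      rw [h9]
      ring
    calc vari ν uA = |vari ν uA| := by
          rw [abs_of_nonneg]
          exact vari_nonneg hν (le_of_eq hνsum) uA
      _ = |expect ν (fun w => u w * uA w) - expect ν u * expect ν uA| := by rw [this]
      _ ≤ ε * Real.sqrt (vari ν u * vari ν uA) := hPP'
  have hvu : 0 ≤ vari ν u := vari_nonneg hν (le_of_eq hνsum) u
  have hvuA : 0 ≤ vari ν uA := vari_nonneg hν (le_of_eq hνsum) uA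
  have hsqrt : Real.sqrt (vari ν u * vari ν uA) = sd ν u * sd ν uA := by
    unfold sd
    exact Real.sqrt_mul hvu _
  rw [hsqrt] at hvar
  have hvar' : sd ν uA * sd ν uA ≤ (ε * sd ν u) * sd ν uA := by
    have : sd ν uA * sd ν uA = vari ν uA := by
      rw [← sd_sq (ν := ν) (f := uA) hvuA]; ring
    rw [this]
    calc vari ν uA ≤ ε * (sd ν u * sd ν uA) := hvar
      _ = (ε * sd ν u) * sd ν uA := by ring
  exact quad_trick (sd_nonneg ν uA) (mul_nonneg hε (sd_nonneg ν u)) hvar'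

lemma card_le_ksub2 {R : Finset (Fin k)} {i j : Fin k} (hiR : i ∉ R) (hjR : j ∉ R)
    (hij : i ≠ j) : R.card ≤ k - 2 := by
  have h1 : (insert i (insert j R)).card = R.card + 2 := by
    rw [Finset.card_insert_of_notMem (by simp [Finset.mem_insert, hij, hiR]),
      Finset.card_insert_of_notMem hjR]
  have h2 : (insert i (insert j R)).card ≤ k := by
    have := Finset.card_le_card (Finset.subset_univ (insert i (insert j R)))
    simpa [Fintype.card_fin] using this
  omega

/-- Main covariance bound: an `{i}`-junta and an `S`-junta (for `i ∉ S`) have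
covariance at most `|S| ε` times the product of standard deviations, in every link. -/
lemma cov_bound {μ : (∀ i, V i) → ℝ} (hμ : IsProb μ) {ε : ℝ} (hε : 0 ≤ ε)
    (hprod : EpsProduct μ ε) :
    ∀ (n : ℕ) (S R : Finset (Fin k)) (x : ∀ i, V i) (i : Fin k),
      S.card = n → marg μ R x ≠ 0 → i ∉ R → i ∉ S → Disjoint S R →
      ∀ (u g : (∀ i, V i) → ℝ), Junta {i} u → Junta S g →
      |cova (cond μ R x) u g| ≤ n * ε * (sd (cond μ R x) u * sd (cond μ R x) g) := by
  intro n
  induction n with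
  | zero =>
    intro S R x i hcard hM hiR hiS hSR u g hu hg
    have hS : S = ∅ := Finset.card_eq_zero.mp hcard
    subst hS
    obtain ⟨x₀⟩ := nonempty_of_prob hμ
    have hgc : ∀ w, g w = g x₀ := fun w => hg w x₀ (by simp)
    have hν : ∀ w, 0 ≤ cond μ R x w := cond_nonneg hμ.1 R x
    have hνsum : ∑ w, cond μ R x w = 1 := sum_cond hM
    have hz : cova (cond μ R x) u g = 0 := by
      unfold cova expect
      have h1 : ∀ w, cond μ R x w * (u w * g w) = g x₀ * (cond μ R x w * u w) := by
        intro w; rw [hgc w]; ring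
      have h2 : ∀ w, cond μ R x w * g w = g x₀ * cond μ R x w := by
        intro w; rw [hgc w]; ring
      simp only [h1, h2]
      rw [← Finset.mul_sum, ← Finset.mul_sum, hνsum]
      ring
    rw [hz]
    simp
  | succ n ih =>
    intro S R x i hcard hM hiR hiS hSR u g hu hg
    have hSne : S.Nonempty := Finset.card_pos.mp (by omega)
    obtain ⟨j, hjS⟩ := hSne
    have hij : i ≠ j := fun h => hiS (h ▸ hjS)
    have hjR : j ∉ R := Finset.disjoint_left.mp hSR hjS
    have hν : ∀ w, 0 ≤ cond μ R x w := cond_nonneg hμ.1 R x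
    have hνsum : ∑ w, cond μ R x w = 1 := sum_cond hM
    -- decomposition: total covariance law
    have key : cova (cond μ R x) u g
        = cova (cond μ R x) (fun z => Aop (cond μ R x) {j} u z)
            (fun z => Aop (cond μ R x) {j} g z)
          + ∑ z, cond μ R x z * cova (cond μ (R ∪ {j}) z) u g := by
      have h1 : expect (cond μ R x) (fun w => u w * g w)
          = ∑ z, cond μ R x z * Aop (cond μ R x) {j} (fun w => u w * g w) z :=
        (expect_Aop hν {j} (fun w => u w * g w)).symm
      have h2 : expect (cond μ R x) u
          = expect (cond μ R x) (fun z => Aop (cond μ R x) {j} u z) :=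
        (expect_Aop hν {j} u).symm
      have h3 : expect (cond μ R x) g
          = expect (cond μ R x) (fun z => Aop (cond μ R x) {j} g z) :=
        (expect_Aop hν {j} g).symm
      have h4 : ∀ z, cond μ R x z * Aop (cond μ R x) {j} (fun w => u w * g w) z
          = cond μ R x z * cova (cond μ (R ∪ {j}) z) u g
            + cond μ R x z * (Aop (cond μ R x) {j} u z * Aop (cond μ R x) {j} g z) := by
        intro z
        by_cases hz : cond μ R x z = 0
        · rw [hz]; ring
        · rw [link_expect_eq hμ {j} (fun w => u w * g w) z hz,
            link_expect_eq hμ {j} u z hz, link_expect_eq hμ {j} g z hz]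
          unfold cova
          ring
      unfold cova
      rw [← h2, ← h3]
      rw [show (expect (cond μ R x) fun x_1 => u x_1 * g x_1)
          = ∑ z, cond μ R x z * Aop (cond μ R x) {j} (fun w => u w * g w) z from h1]
      rw [Finset.sum_congr rfl fun z _ => h4 z, Finset.sum_add_distrib]
      have h5 : ∑ z, cond μ R x z * (Aop (cond μ R x) {j} u z * Aop (cond μ R x) {j} g z)
          = expect (cond μ R x)
              (fun z => Aop (cond μ R x) {j} u z * Aop (cond μ R x) {j} g z) := rfl
      rw [h5]
      simp only [cova]
      ring
    -- bound the smoothed covariance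
    have hcov1 : |cova (cond μ R x) (fun z => Aop (cond μ R x) {j} u z)
        (fun z => Aop (cond μ R x) {j} g z)|
        ≤ (ε * sd (cond μ R x) u) * sd (cond μ R x) g := by
      have ha := abs_cova_le hν hνsum (fun z => Aop (cond μ R x) {j} u z)
        (fun z => Aop (cond μ R x) {j} g z)
      have hsdu : sd (cond μ R x) (fun z => Aop (cond μ R x) {j} u z)
          ≤ ε * sd (cond μ R x) u :=
        sd_Aop_single hμ hε hprod hM (card_le_ksub2 hiR hjR hij) hij hiR hjR hu
      have hsdg : sd (cond μ R x) (fun z => Aop (cond μ R x) {j} g z)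
          ≤ sd (cond μ R x) g := sd_Aop_le hν hνsum {j} g
      calc |cova (cond μ R x) _ _| ≤ _ := ha
        _ ≤ (ε * sd (cond μ R x) u) * sd (cond μ R x) g :=
          mul_le_mul hsdu hsdg (sd_nonneg _ _)
            (mul_nonneg hε (sd_nonneg _ _))
    -- bound the linked covariances
    have hlink : ∀ z, cond μ R x z ≠ 0 →
        |cova (cond μ (R ∪ {j}) z) u g| ≤
          n * ε * (sd (cond μ (R ∪ {j}) z) u * sd (cond μ (R ∪ {j}) z) g) := by
      intro z hz
      have hM' : marg μ (R ∪ {j}) z ≠ 0 := marg_ne_zero_of_cond_ne_zero hμ hz _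
      have hg1J : Junta (S.erase j) (fun w => g (Function.update w j (z j))) := by
        intro w w' hww
        apply hg
        intro l hl
        by_cases hlj : l = j
        · subst hlj; simp
        · rw [Function.update_of_ne hlj, Function.update_of_ne hlj]
          exact hww l (Finset.mem_erase.2 ⟨hlj, hl⟩)
      have hsupp : ∀ w, cond μ (R ∪ {j}) z w ≠ 0 →
          g w = g (Function.update w j (z j)) := by
        intro w hw
        have hwj : w j = z j := (cond_ne_zero hw).2 j
          (Finset.mem_union_right R (Finset.mem_singleton_self j))
        rw [← hwj, Function.update_eq_self]
      have hcongr : cova (cond μ (R ∪ {j}) z) u g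
          = cova (cond μ (R ∪ {j}) z) u (fun w => g (Function.update w j (z j))) :=
        cova_congr_support (fun _ _ => rfl) hsupp
      have hvcongr : vari (cond μ (R ∪ {j}) z) g
          = vari (cond μ (R ∪ {j}) z) (fun w => g (Function.update w j (z j))) :=
        vari_congr_support hsupp
      have hIH := ih (S.erase j) (R ∪ {j}) z i
        (by rw [Finset.card_erase_of_mem hjS, hcard]; omega) hM'
        (by simp [Finset.mem_union, hiR, hij])
        (fun h => hiS (Finset.mem_of_mem_erase h))
        (Finset.disjoint_union_right.mpr
          ⟨Finset.disjoint_of_subset_left (Finset.erase_subset j S) hSR,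
            Finset.disjoint_singleton_right.mpr (Finset.notMem_erase j S)⟩)
        u (fun w => g (Function.update w j (z j))) hu hg1J
      rw [hcongr]
      unfold sd
      rw [hvcongr]
      exact hIH
    -- sum the linked bounds
    have hsum1 : |∑ z, cond μ R x z * cova (cond μ (R ∪ {j}) z) u g|
        ≤ n * ε * (sd (cond μ R x) u * sd (cond μ R x) g) := by
      have step1 : |∑ z, cond μ R x z * cova (cond μ (R ∪ {j}) z) u g|
          ≤ ∑ z, cond μ R x z *
              ((n * ε) * (sd (cond μ (R ∪ {j}) z) u * sd (cond μ (R ∪ {j}) z) g)) := by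
        calc |∑ z, cond μ R x z * cova (cond μ (R ∪ {j}) z) u g|
            ≤ ∑ z, |cond μ R x z * cova (cond μ (R ∪ {j}) z) u g| :=
              Finset.abs_sum_le_sum_abs _ _
          _ ≤ _ := by
              refine Finset.sum_le_sum fun z _ => ?_
              rw [abs_mul, abs_of_nonneg (hν z)]
              by_cases hz : cond μ R x z = 0
              · rw [hz]; simp
              · have hb := hlink z hz
                have : |cova (cond μ (R ∪ {j}) z) u g|
                    ≤ (n * ε) * (sd (cond μ (R ∪ {j}) z) u * sd (cond μ (R ∪ {j}) z) g) := by
                  calc |cova (cond μ (R ∪ {j}) z) u g| ≤ _ := hb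
                    _ = (n * ε) * (sd (cond μ (R ∪ {j}) z) u
                        * sd (cond μ (R ∪ {j}) z) g) := by ring
                exact mul_le_mul_of_nonneg_left this (hν z)
      have step2 : ∑ z, cond μ R x z *
            ((n * ε) * (sd (cond μ (R ∪ {j}) z) u * sd (cond μ (R ∪ {j}) z) g))
          = (n * ε) * ∑ z, cond μ R x z *
              (sd (cond μ (R ∪ {j}) z) u * sd (cond μ (R ∪ {j}) z) g) := by
        rw [Finset.mul_sum]
        exact Finset.sum_congr rfl fun z _ => by ring
      have hCS : ∑ z, cond μ R x z *
            (sd (cond μ (R ∪ {j}) z) u * sd (cond μ (R ∪ {j}) z) g)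
          ≤ sd (cond μ R x) u * sd (cond μ R x) g := by
        have habs := weighted_CS_abs (w := cond μ R x)
          (a := fun z => sd (cond μ (R ∪ {j}) z) u)
          (b := fun z => sd (cond μ (R ∪ {j}) z) g) hν
        have hsq : ∀ (h : (∀ l, V l) → ℝ),
            (∑ z, cond μ R x z * sd (cond μ (R ∪ {j}) z) h ^ 2)
            = ∑ z, cond μ R x z * vari (cond μ (R ∪ {j}) z) h := by
          intro h
          exact Finset.sum_congr rfl fun z _ => by
            rw [sd_sq (vari_cond_nonneg hμ.1 _ _ h)]
        have hA : Real.sqrt (∑ z, cond μ R x z * sd (cond μ (R ∪ {j}) z) u ^ 2)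
            ≤ sd (cond μ R x) u := by
          rw [hsq u]
          exact Real.sqrt_le_sqrt (total_variance_le hμ hM j u)
        have hB : Real.sqrt (∑ z, cond μ R x z * sd (cond μ (R ∪ {j}) z) g ^ 2)
            ≤ sd (cond μ R x) g := by
          rw [hsq g]
          exact Real.sqrt_le_sqrt (total_variance_le hμ hM j g)
        calc ∑ z, cond μ R x z *
              (sd (cond μ (R ∪ {j}) z) u * sd (cond μ (R ∪ {j}) z) g)
            ≤ |∑ z, cond μ R x z *
              (sd (cond μ (R ∪ {j}) z) u * sd (cond μ (R ∪ {j}) z) g)| := le_abs_self _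
          _ ≤ Real.sqrt (∑ z, cond μ R x z * sd (cond μ (R ∪ {j}) z) u ^ 2)
              * Real.sqrt (∑ z, cond μ R x z * sd (cond μ (R ∪ {j}) z) g ^ 2) := habs
          _ ≤ sd (cond μ R x) u * sd (cond μ R x) g :=
              mul_le_mul hA hB (Real.sqrt_nonneg _) (sd_nonneg _ _)
      calc |∑ z, cond μ R x z * cova (cond μ (R ∪ {j}) z) u g|
          ≤ ∑ z, cond μ R x z *
              ((n * ε) * (sd (cond μ (R ∪ {j}) z) u * sd (cond μ (R ∪ {j}) z) g)) := step1
        _ = (n * ε) * ∑ z, cond μ R x z *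
              (sd (cond μ (R ∪ {j}) z) u * sd (cond μ (R ∪ {j}) z) g) := step2
        _ ≤ (n * ε) * (sd (cond μ R x) u * sd (cond μ R x) g) := by
            refine mul_le_mul_of_nonneg_left hCS ?_
            positivity
        _ = n * ε * (sd (cond μ R x) u * sd (cond μ R x) g) := by ring
    -- combine
    rw [key]
    calc |cova (cond μ R x) (fun z => Aop (cond μ R x) {j} u z)
          (fun z => Aop (cond μ R x) {j} g z)
        + ∑ z, cond μ R x z * cova (cond μ (R ∪ {j}) z) u g|
        ≤ |cova (cond μ R x) (fun z => Aop (cond μ R x) {j} u z)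
            (fun z => Aop (cond μ R x) {j} g z)|
          + |∑ z, cond μ R x z * cova (cond μ (R ∪ {j}) z) u g| := abs_add_le _ _
      _ ≤ (ε * sd (cond μ R x) u) * sd (cond μ R x) g
          + n * ε * (sd (cond μ R x) u * sd (cond μ R x) g) := add_le_add hcov1 hsum1
      _ = (n + 1 : ℕ) * ε * (sd (cond μ R x) u * sd (cond μ R x) g) := by
          push_cast
          ring

/-- Averaging an `S`-junta over a single coordinate outside `S` contracts by `|S| ε`. -/
lemma sd_Aop_block {μ : (∀ i, V i) → ℝ} (hμ : IsProb μ) {ε : ℝ} (hε : 0 ≤ ε)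
    (hprod : EpsProduct μ ε) {S R : Finset (Fin k)} {x : ∀ i, V i} {i : Fin k}
    (hM : marg μ R x ≠ 0) (hiR : i ∉ R) (hiS : i ∉ S) (hSR : Disjoint S R)
    {g : (∀ i, V i) → ℝ} (hg : Junta S g) :
    sd (cond μ R x) (fun z => Aop (cond μ R x) {i} g z)
      ≤ S.card * ε * sd (cond μ R x) g := by
  have hν : ∀ w, 0 ≤ cond μ R x w := cond_nonneg hμ.1 R x
  have hνsum : ∑ w, cond μ R x w = 1 := sum_cond hM
  have huJ : Junta {i} (fun z => Aop (cond μ R x) {i} g z) := Aop_junta _ {i} g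
  have hvar_eq : vari (cond μ R x) (fun z => Aop (cond μ R x) {i} g z)
      = cova (cond μ R x) (fun z => Aop (cond μ R x) {i} g z) g := by
    unfold vari cova
    have hEA : expect (cond μ R x) (fun z => Aop (cond μ R x) {i} g z)
        = expect (cond μ R x) g := expect_Aop hν {i} g
    have hadj := sum_Aop_mul_junta hν (R := {i}) (Aop_junta (cond μ R x) {i} g) g
    have h1 : expect (cond μ R x) (fun z => Aop (cond μ R x) {i} g z ^ 2)
        = expect (cond μ R x) (fun z => Aop (cond μ R x) {i} g z * g z) := by
      unfold expect
      rw [show (∑ z, cond μ R x z * Aop (cond μ R x) {i} g z ^ 2)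
          = ∑ z, cond μ R x z * (Aop (cond μ R x) {i} g z * Aop (cond μ R x) {i} g z)
          from Finset.sum_congr rfl fun z _ => by ring]
      rw [hadj]
      exact Finset.sum_congr rfl fun z _ => by ring
    rw [h1, hEA]
    ring
  have hcb := cov_bound hμ hε hprod S.card S R x i rfl hM hiR hiS hSR
    (fun z => Aop (cond μ R x) {i} g z) g huJ hg
  have hv0 : 0 ≤ vari (cond μ R x) (fun z => Aop (cond μ R x) {i} g z) :=
    vari_nonneg hν (le_of_eq hνsum) _
  have h2 : sd (cond μ R x) (fun z => Aop (cond μ R x) {i} g z)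
      * sd (cond μ R x) (fun z => Aop (cond μ R x) {i} g z)
      ≤ (S.card * ε * sd (cond μ R x) g)
        * sd (cond μ R x) (fun z => Aop (cond μ R x) {i} g z) := by
    have e : sd (cond μ R x) (fun z => Aop (cond μ R x) {i} g z)
        * sd (cond μ R x) (fun z => Aop (cond μ R x) {i} g z)
        = vari (cond μ R x) (fun z => Aop (cond μ R x) {i} g z) := by
      rw [← sd_sq hv0]; ring
    rw [e, hvar_eq]
    calc cova (cond μ R x) (fun z => Aop (cond μ R x) {i} g z) g
        ≤ |cova (cond μ R x) (fun z => Aop (cond μ R x) {i} g z) g| := le_abs_self _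
      _ ≤ S.card * ε * (sd (cond μ R x) (fun z => Aop (cond μ R x) {i} g z)
          * sd (cond μ R x) g) := hcb
      _ = (S.card * ε * sd (cond μ R x) g)
          * sd (cond μ R x) (fun z => Aop (cond μ R x) {i} g z) := by ring
  exact quad_trick (sd_nonneg _ _)
    (mul_nonneg (mul_nonneg (by positivity) hε) (sd_nonneg _ _)) h2

lemma sq_of_sqrt_le {X B : ℝ} (hX : 0 ≤ X) (h : Real.sqrt X ≤ B) : X ≤ B ^ 2 := by
  nlinarith [Real.sq_sqrt hX, Real.sqrt_nonneg X]

/-- Triangle inequality for the weighted `L²` seminorm. -/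
lemma norm2_triangle {ν : (∀ i, V i) → ℝ} (hν : ∀ x, 0 ≤ ν x)
    (a b : (∀ i, V i) → ℝ) :
    Real.sqrt (∑ z, ν z * (a z + b z) ^ 2)
      ≤ Real.sqrt (∑ z, ν z * a z ^ 2) + Real.sqrt (∑ z, ν z * b z ^ 2) := by
  have hA : (0:ℝ) ≤ ∑ z, ν z * a z ^ 2 :=
    Finset.sum_nonneg fun z _ => mul_nonneg (hν z) (sq_nonneg _)
  have hB : (0:ℝ) ≤ ∑ z, ν z * b z ^ 2 :=
    Finset.sum_nonneg fun z _ => mul_nonneg (hν z) (sq_nonneg _)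
  have h1 : ∑ z, ν z * (a z + b z) ^ 2
      = (∑ z, ν z * a z ^ 2) + 2 * (∑ z, ν z * (a z * b z)) + ∑ z, ν z * b z ^ 2 := by
    have e : ∀ z : ∀ i, V i, ν z * (a z + b z) ^ 2
        = ν z * a z ^ 2 + 2 * (ν z * (a z * b z)) + ν z * b z ^ 2 := fun z => by ring
    simp only [e]
    rw [Finset.sum_add_distrib, Finset.sum_add_distrib, ← Finset.mul_sum]
  have h2 : ∑ z, ν z * (a z * b z)
      ≤ Real.sqrt (∑ z, ν z * a z ^ 2) * Real.sqrt (∑ z, ν z * b z ^ 2) :=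
    le_trans (le_abs_self _) (weighted_CS_abs hν)
  have h3 : ∑ z, ν z * (a z + b z) ^ 2
      ≤ (Real.sqrt (∑ z, ν z * a z ^ 2) + Real.sqrt (∑ z, ν z * b z ^ 2)) ^ 2 := by
    rw [h1]
    nlinarith [Real.sq_sqrt hA, Real.sq_sqrt hB, h2]
  calc Real.sqrt (∑ z, ν z * (a z + b z) ^ 2)
      ≤ Real.sqrt ((Real.sqrt (∑ z, ν z * a z ^ 2)
          + Real.sqrt (∑ z, ν z * b z ^ 2)) ^ 2) := Real.sqrt_le_sqrt h3
    _ = _ := Real.sqrt_sq (by positivity)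

/-- Averaging an `S`-junta over a disjoint set `T` contracts by `|T||S| ε`. -/
lemma Aop_block_bound {μ : (∀ i, V i) → ℝ} (hμ : IsProb μ) {ε : ℝ} (hε : 0 ≤ ε)
    (hprod : EpsProduct μ ε) :
    ∀ (m : ℕ) (T S R : Finset (Fin k)) (x : ∀ i, V i),
      T.card = m → marg μ R x ≠ 0 → Disjoint T S → Disjoint T R → Disjoint S R →
      ∀ g : (∀ i, V i) → ℝ, Junta S g →
      Real.sqrt (∑ z, cond μ R x z
          * (Aop (cond μ R x) T g z - expect (cond μ R x) g) ^ 2)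
        ≤ (m * S.card) * ε * sd (cond μ R x) g := by
  intro m
  induction m with
  | zero =>
    intro T S R x hcard hM hTS hTR hSR g hg
    have hT : T = ∅ := Finset.card_eq_zero.mp hcard
    subst hT
    have hνsum : ∑ w, cond μ R x w = 1 := sum_cond hM
    have hz : ∀ z, Aop (cond μ R x) ∅ g z - expect (cond μ R x) g = 0 := by
      intro z
      rw [Aop_empty hνsum g z, sub_self]
    simp only [hz]
    simp only [ne_eq, OfNat.ofNat_ne_zero, not_false_eq_true, zero_pow, mul_zero,
      Finset.sum_const_zero, Real.sqrt_zero]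
    have : (0:ℝ) ≤ (0 * S.card : ℕ) * ε * sd (cond μ R x) g := by
      apply mul_nonneg (mul_nonneg (by positivity) hε) (sd_nonneg _ _)
    simpa using this
  | succ m ih =>
    intro T S R x hcard hM hTS hTR hSR g hg
    have hTne : T.Nonempty := Finset.card_pos.mp (by omega)
    obtain ⟨i, hiT⟩ := hTne
    have hiS : i ∉ S := Finset.disjoint_left.mp hTS hiT
    have hiR : i ∉ R := Finset.disjoint_left.mp hTR hiT
    have hν : ∀ w, 0 ≤ cond μ R x w := cond_nonneg hμ.1 R x
    have hνsum : ∑ w, cond μ R x w = 1 := sum_cond hM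
    -- split
    have hsplit : Real.sqrt (∑ z, cond μ R x z
          * (Aop (cond μ R x) T g z - expect (cond μ R x) g) ^ 2)
        ≤ Real.sqrt (∑ z, cond μ R x z
            * (Aop (cond μ R x) T g z - Aop (cond μ R x) {i} g z) ^ 2)
          + Real.sqrt (∑ z, cond μ R x z
            * (Aop (cond μ R x) {i} g z - expect (cond μ R x) g) ^ 2) := by
      have e : ∑ z, cond μ R x z
          * (Aop (cond μ R x) T g z - expect (cond μ R x) g) ^ 2
          = ∑ z, cond μ R x z
            * ((Aop (cond μ R x) T g z - Aop (cond μ R x) {i} g z)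
              + (Aop (cond μ R x) {i} g z - expect (cond μ R x) g)) ^ 2 :=
        Finset.sum_congr rfl fun z _ => by ring_nf
      rw [e]
      exact norm2_triangle hν _ _
    -- second term
    have hterm2 : Real.sqrt (∑ z, cond μ R x z
          * (Aop (cond μ R x) {i} g z - expect (cond μ R x) g) ^ 2)
        ≤ S.card * ε * sd (cond μ R x) g := by
      have e : ∑ z, cond μ R x z
          * (Aop (cond μ R x) {i} g z - expect (cond μ R x) g) ^ 2
          = vari (cond μ R x) (fun z => Aop (cond μ R x) {i} g z) := by
        have hEA : expect (cond μ R x) (fun z => Aop (cond μ R x) {i} g z)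
            = expect (cond μ R x) g := expect_Aop hν {i} g
        unfold vari
        rw [hEA]
        have e2 : ∀ z, cond μ R x z
            * (Aop (cond μ R x) {i} g z - expect (cond μ R x) g) ^ 2
            = cond μ R x z * Aop (cond μ R x) {i} g z ^ 2
              - 2 * expect (cond μ R x) g * (cond μ R x z * Aop (cond μ R x) {i} g z)
              + expect (cond μ R x) g ^ 2 * cond μ R x z := fun z => by ring
        simp only [e2]
        rw [Finset.sum_add_distrib, Finset.sum_sub_distrib, ← Finset.mul_sum,
          ← Finset.mul_sum, hνsum]
        have e3 : ∑ z, cond μ R x z * Aop (cond μ R x) {i} g z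
            = expect (cond μ R x) g := hEA
        rw [e3]
        have e4 : ∑ z, cond μ R x z * Aop (cond μ R x) {i} g z ^ 2
            = expect (cond μ R x) (fun z => Aop (cond μ R x) {i} g z ^ 2) := rfl
        rw [e4]
        ring
      rw [e]
      exact sd_Aop_block hμ hε hprod hM hiR hiS hSR hg
    -- first term
    have hterm1 : Real.sqrt (∑ z, cond μ R x z
          * (Aop (cond μ R x) T g z - Aop (cond μ R x) {i} g z) ^ 2)
        ≤ (m * S.card) * ε * sd (cond μ R x) g := by
      set C : ℝ := (m * S.card : ℕ) * ε with hC
      have hC0 : 0 ≤ C := mul_nonneg (by positivity) hε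
      have hmain : ∑ z, cond μ R x z
            * (Aop (cond μ R x) T g z - Aop (cond μ R x) {i} g z) ^ 2
          ≤ C ^ 2 * vari (cond μ R x) g := by
        have hrw : ∑ z, cond μ R x z
              * (Aop (cond μ R x) T g z - Aop (cond μ R x) {i} g z) ^ 2
            = ∑ z, cond μ R x z * Aop (cond μ R x) {i}
                (fun w => (Aop (cond μ R x) T g w - Aop (cond μ R x) {i} g w) ^ 2) z := by
          exact (expect_Aop hν {i}
            (fun w => (Aop (cond μ R x) T g w - Aop (cond μ R x) {i} g w) ^ 2)).symm
        rw [hrw]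
        have hptwise : ∀ z, cond μ R x z * Aop (cond μ R x) {i}
              (fun w => (Aop (cond μ R x) T g w - Aop (cond μ R x) {i} g w) ^ 2) z
            ≤ cond μ R x z * (C ^ 2 * vari (cond μ (R ∪ {i}) z) g) := by
          intro z
          by_cases hz : cond μ R x z = 0
          · rw [hz]; simp
          · have hzsupp := (cond_ne_zero hz).2
            have hM' : marg μ (R ∪ {i}) z ≠ 0 := marg_ne_zero_of_cond_ne_zero hμ hz _
            have hlinkcond : cond (cond μ R x) {i} z = cond μ (R ∪ {i}) z :=
              cond_cond hμ.1 hzsupp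
            have hinner : Aop (cond μ R x) {i}
                  (fun w => (Aop (cond μ R x) T g w - Aop (cond μ R x) {i} g w) ^ 2) z
                = ∑ w, cond μ (R ∪ {i}) z w
                    * (Aop (cond μ (R ∪ {i}) z) (T.erase i) g w
                      - expect (cond μ (R ∪ {i}) z) g) ^ 2 := by
              have h0 : Aop (cond μ R x) {i}
                  (fun w => (Aop (cond μ R x) T g w - Aop (cond μ R x) {i} g w) ^ 2) z
                  = ∑ w, cond μ (R ∪ {i}) z w
                      * (Aop (cond μ R x) T g w - Aop (cond μ R x) {i} g w) ^ 2 := by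
                unfold Aop
                rw [hlinkcond]
              rw [h0]
              refine Finset.sum_congr rfl fun w _ => ?_
              by_cases hw : cond μ (R ∪ {i}) z w = 0
              · rw [hw]; ring
              · have hwsupp := (cond_ne_zero hw).2
                have hwi : w i = z i := hwsupp i
                  (Finset.mem_union_right R (Finset.mem_singleton_self i))
                have ea : Aop (cond μ R x) T g w = Aop (cond μ (R ∪ {i}) z) T g w := by
                  rw [← hlinkcond]
                  exact (Aop_cond hν (Finset.singleton_subset_iff.mpr hiT)
                    (fun l hl => by rw [Finset.mem_singleton] at hl; rw [hl]; exact hwi)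
                    g).symm
                have eb : Aop (cond μ (R ∪ {i}) z) T g w
                    = Aop (cond μ (R ∪ {i}) z) (T.erase i) g w := by
                  rw [Finset.erase_eq]
                  exact Aop_drop (x₁ := z) (R₁ := {i})
                    (fun w' hw' l hl => (cond_ne_zero hw').2 l (Finset.mem_union_right R hl))
                    (fun l hl => by rw [Finset.mem_singleton] at hl; rw [hl]; exact hwi)
                    T g
                have ec : Aop (cond μ R x) {i} g w = expect (cond μ (R ∪ {i}) z) g := by
                  have h5 : Aop (cond μ R x) {i} g w = Aop (cond μ R x) {i} g z :=
                    Aop_junta (cond μ R x) {i} g w z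
                      (fun l hl => by rw [Finset.mem_singleton] at hl; rw [hl]; exact hwi)
                  rw [h5]
                  exact link_expect_eq hμ {i} g z hz
                rw [ea, eb, ec]
            rw [hinner]
            refine mul_le_mul_of_nonneg_left ?_ (hν z)
            have hIH := ih (T.erase i) S (R ∪ {i}) z
              (by rw [Finset.card_erase_of_mem hiT, hcard]; omega) hM'
              (Finset.disjoint_of_subset_left (Finset.erase_subset i T) hTS)
              (Finset.disjoint_union_right.mpr
                ⟨Finset.disjoint_of_subset_left (Finset.erase_subset i T) hTR,
                  Finset.disjoint_singleton_right.mpr (Finset.notMem_erase i T)⟩)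
              (Finset.disjoint_union_right.mpr
                ⟨hSR, Finset.disjoint_singleton_right.mpr hiS⟩) g hg
            have hnn : (0:ℝ) ≤ ∑ w, cond μ (R ∪ {i}) z w
                * (Aop (cond μ (R ∪ {i}) z) (T.erase i) g w
                  - expect (cond μ (R ∪ {i}) z) g) ^ 2 :=
              Finset.sum_nonneg fun w _ =>
                mul_nonneg (cond_nonneg hμ.1 _ _ w) (sq_nonneg _)
            have := sq_of_sqrt_le hnn hIH
            calc ∑ w, cond μ (R ∪ {i}) z w
                  * (Aop (cond μ (R ∪ {i}) z) (T.erase i) g w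
                    - expect (cond μ (R ∪ {i}) z) g) ^ 2
                ≤ ((m : ℝ) * (S.card : ℝ) * ε * sd (cond μ (R ∪ {i}) z) g) ^ 2 := this
              _ = C ^ 2 * sd (cond μ (R ∪ {i}) z) g ^ 2 := by rw [hC]; push_cast; ring
              _ = C ^ 2 * vari (cond μ (R ∪ {i}) z) g := by
                  rw [sd_sq (vari_cond_nonneg hμ.1 _ _ g)]
        calc ∑ z, cond μ R x z * Aop (cond μ R x) {i}
              (fun w => (Aop (cond μ R x) T g w - Aop (cond μ R x) {i} g w) ^ 2) z
            ≤ ∑ z, cond μ R x z * (C ^ 2 * vari (cond μ (R ∪ {i}) z) g) :=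
              Finset.sum_le_sum fun z _ => hptwise z
          _ = C ^ 2 * ∑ z, cond μ R x z * vari (cond μ (R ∪ {i}) z) g := by
              rw [Finset.mul_sum]
              exact Finset.sum_congr rfl fun z _ => by ring
          _ ≤ C ^ 2 * vari (cond μ R x) g := by
              refine mul_le_mul_of_nonneg_left ?_ (sq_nonneg C)
              exact total_variance_le hμ hM i g
      calc Real.sqrt (∑ z, cond μ R x z
            * (Aop (cond μ R x) T g z - Aop (cond μ R x) {i} g z) ^ 2)
          ≤ Real.sqrt (C ^ 2 * vari (cond μ R x) g) := Real.sqrt_le_sqrt hmain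
        _ = C * sd (cond μ R x) g := by
            rw [Real.sqrt_mul (sq_nonneg C), Real.sqrt_sq hC0]
            rfl
        _ = (m * S.card) * ε * sd (cond μ R x) g := by rw [hC]; push_cast; ring
    calc Real.sqrt (∑ z, cond μ R x z
          * (Aop (cond μ R x) T g z - expect (cond μ R x) g) ^ 2)
        ≤ _ := hsplit
      _ ≤ (m * S.card) * ε * sd (cond μ R x) g + S.card * ε * sd (cond μ R x) g :=
          add_le_add hterm1 hterm2
      _ = ((m + 1 : ℕ) * S.card) * ε * sd (cond μ R x) g := by push_cast; ring

/-- Composition bound: `A_T A_S ≈ A_{S∩T}`. -/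
lemma AopAop_bound {μ : (∀ i, V i) → ℝ} (hμ : IsProb μ) {ε : ℝ} (hε : 0 ≤ ε)
    (hprod : EpsProduct μ ε) (S T : Finset (Fin k)) (h : (∀ i, V i) → ℝ) :
    normSq μ (fun w => Aop μ T (Aop μ S h) w - Aop μ (S ∩ T) h w)
      ≤ ((k:ℝ) ^ 2 * ε) ^ 2 * normSq μ h := by
  set R := S ∩ T with hR
  have hRS : R ⊆ S := Finset.inter_subset_left
  have hRT : R ⊆ T := Finset.inter_subset_right
  have hstep1 : normSq μ (fun w => Aop μ T (Aop μ S h) w - Aop μ R h w)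
      = ∑ x, μ x * Aop μ R (fun w => (Aop μ T (Aop μ S h) w - Aop μ R h w) ^ 2) x :=
    (expect_Aop hμ.1 R (fun w => (Aop μ T (Aop μ S h) w - Aop μ R h w) ^ 2)).symm
  have hterm : ∀ x, μ x * Aop μ R (fun w => (Aop μ T (Aop μ S h) w - Aop μ R h w) ^ 2) x
      ≤ μ x * (((k:ℝ) ^ 2 * ε) ^ 2 * Aop μ R (fun w => h w ^ 2) x) := by
    intro x
    by_cases hx : μ x = 0
    · rw [hx]; simp
    · have hMx : marg μ R x ≠ 0 :=
        ne_of_gt (marg_pos hμ.1 (lt_of_le_of_ne (hμ.1 x) (Ne.symm hx)) R)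
      refine mul_le_mul_of_nonneg_left ?_ (hμ.1 x)
      have hν : ∀ w, 0 ≤ cond μ R x w := cond_nonneg hμ.1 R x
      have hνsum : ∑ w, cond μ R x w = 1 := sum_cond hMx
      set gt : (∀ l, V l) → ℝ :=
        fun w => Aop (cond μ R x) S h (fun l => if l ∈ R then x l else w l) with hgt
      have hgtJ : Junta (S \ R) gt := by
        intro w w' hww
        apply Aop_junta (cond μ R x) S h
        intro l hl
        by_cases hlR : l ∈ R
        · simp [hlR]
        · simp only [hlR, if_false]
          exact hww l (Finset.mem_sdiff.2 ⟨hl, hlR⟩)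
      have hgteq : ∀ w, cond μ R x w ≠ 0 → gt w = Aop (cond μ R x) S h w := by
        intro w hw
        have hfix : (fun l => if l ∈ R then x l else w l) = w := by
          funext l
          by_cases hlR : l ∈ R
          · simp [hlR, (cond_ne_zero hw).2 l hlR]
          · simp [hlR]
        rw [hgt]
        dsimp only
        rw [hfix]
      have hgmu : ∀ w, cond μ R x w ≠ 0 →
          Aop (cond μ R x) S h w = Aop μ S h w := fun w hw =>
        Aop_cond hμ.1 hRS (cond_ne_zero hw).2 h
      have hFw : ∀ w, cond μ R x w ≠ 0 →
          Aop μ T (Aop μ S h) w - Aop μ R h w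
          = Aop (cond μ R x) (T \ R) gt w - expect (cond μ R x) gt := by
        intro w hw
        have hwR := (cond_ne_zero hw).2
        have ha : Aop μ R h w = expect (cond μ R x) h := by
          rw [Aop_junta μ R h w x hwR]; rfl
        have hb : Aop μ T (Aop μ S h) w = Aop (cond μ R x) T (Aop μ S h) w :=
          (Aop_cond hμ.1 hRT hwR (Aop μ S h)).symm
        have hc : Aop (cond μ R x) T (Aop μ S h) w = Aop (cond μ R x) T gt w :=
          Aop_congr_support
            (fun w' hw' => ((hgteq w' hw').trans (hgmu w' hw')).symm) hν T w
        have hd : Aop (cond μ R x) T gt w = Aop (cond μ R x) (T \ R) gt w :=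
          Aop_drop (x₁ := x) (R₁ := R)
            (fun w' hw' l hl => (cond_ne_zero hw').2 l hl) hwR T gt
        have he : expect (cond μ R x) h = expect (cond μ R x) gt := by
          rw [← expect_Aop hν S h]
          exact expect_congr_support (fun w' hw' => (hgteq w' hw').symm)
        rw [hb, hc, hd, ha, he]
      have hsum_eq : Aop μ R (fun w => (Aop μ T (Aop μ S h) w - Aop μ R h w) ^ 2) x
          = ∑ w, cond μ R x w
              * (Aop (cond μ R x) (T \ R) gt w - expect (cond μ R x) gt) ^ 2 := by
        show (∑ w, cond μ R x w * (Aop μ T (Aop μ S h) w - Aop μ R h w) ^ 2) = _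
        refine Finset.sum_congr rfl fun w _ => ?_
        by_cases hw : cond μ R x w = 0
        · rw [hw]; ring
        · rw [hFw w hw]
      have hsum_eq2 : Aop μ R (fun w => h w ^ 2) x = ∑ w, cond μ R x w * h w ^ 2 := rfl
      rw [hsum_eq, hsum_eq2]
      -- apply the block bound
      have hdisj1 : Disjoint (T \ R) (S \ R) := by
        refine Finset.disjoint_left.mpr fun a haT haS => ?_
        refine (Finset.mem_sdiff.1 haT).2 ?_
        rw [hR]
        exact Finset.mem_inter.2 ⟨(Finset.mem_sdiff.1 haS).1, (Finset.mem_sdiff.1 haT).1⟩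
      have hL3 := Aop_block_bound hμ hε hprod (T \ R).card (T \ R) (S \ R) R x rfl hMx
        hdisj1 Finset.sdiff_disjoint Finset.sdiff_disjoint gt hgtJ
      have hnn : (0:ℝ) ≤ ∑ w, cond μ R x w
          * (Aop (cond μ R x) (T \ R) gt w - expect (cond μ R x) gt) ^ 2 :=
        Finset.sum_nonneg fun w _ => mul_nonneg (hν w) (sq_nonneg _)
      have hsq := sq_of_sqrt_le hnn hL3
      have hcard1 : ((T \ R).card : ℝ) ≤ (k : ℝ) := by
        have := Finset.card_le_card (Finset.subset_univ (T \ R))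
        rw [Finset.card_univ, Fintype.card_fin] at this
        exact_mod_cast this
      have hcard2 : ((S \ R).card : ℝ) ≤ (k : ℝ) := by
        have := Finset.card_le_card (Finset.subset_univ (S \ R))
        rw [Finset.card_univ, Fintype.card_fin] at this
        exact_mod_cast this
      have hk0 : (0:ℝ) ≤ (k:ℝ) := Nat.cast_nonneg k
      have hC1 : (((T \ R).card : ℝ) * ((S \ R).card : ℝ)) * ε ≤ (k:ℝ) ^ 2 * ε := by
        have : (((T \ R).card : ℝ) * ((S \ R).card : ℝ)) ≤ (k:ℝ) ^ 2 := by
          calc (((T \ R).card : ℝ) * ((S \ R).card : ℝ)) ≤ (k:ℝ) * (k:ℝ) :=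
              mul_le_mul hcard1 hcard2 (Nat.cast_nonneg _) hk0
            _ = (k:ℝ) ^ 2 := by ring
        exact mul_le_mul_of_nonneg_right this hε
      have hC10 : (0:ℝ) ≤ (((T \ R).card : ℝ) * ((S \ R).card : ℝ)) * ε := by positivity
      have hvgt : vari (cond μ R x) gt ≤ ∑ w, cond μ R x w * h w ^ 2 := by
        have h1 : vari (cond μ R x) gt ≤ expect (cond μ R x) (fun w => gt w ^ 2) := by
          unfold vari
          nlinarith [sq_nonneg (expect (cond μ R x) gt)]
        have h2 : expect (cond μ R x) (fun w => gt w ^ 2)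
            = ∑ w, cond μ R x w * (Aop (cond μ R x) S h w) ^ 2 := by
          refine expect_congr_support fun w hw => ?_
          rw [hgteq w hw]
        have h3 := Aop_sq_le hν S h
        calc vari (cond μ R x) gt ≤ expect (cond μ R x) (fun w => gt w ^ 2) := h1
          _ = ∑ w, cond μ R x w * (Aop (cond μ R x) S h w) ^ 2 := h2
          _ ≤ ∑ w, cond μ R x w * h w ^ 2 := h3
      calc ∑ w, cond μ R x w
            * (Aop (cond μ R x) (T \ R) gt w - expect (cond μ R x) gt) ^ 2
          ≤ ((((T \ R).card : ℝ) * ((S \ R).card : ℝ)) * ε) ^ 2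
              * vari (cond μ R x) gt := by
            have e : ((((T \ R).card : ℝ) * ((S \ R).card : ℝ)) * ε
                  * sd (cond μ R x) gt) ^ 2
                = ((((T \ R).card : ℝ) * ((S \ R).card : ℝ)) * ε) ^ 2
                  * vari (cond μ R x) gt := by
              rw [mul_pow, sd_sq (vari_cond_nonneg hμ.1 R x gt)]
            rw [← e]
            exact hsq
        _ ≤ ((k:ℝ) ^ 2 * ε) ^ 2 * vari (cond μ R x) gt :=
            mul_le_mul_of_nonneg_right (pow_le_pow_left₀ hC10 hC1 2)
              (vari_cond_nonneg hμ.1 R x gt)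
        _ ≤ ((k:ℝ) ^ 2 * ε) ^ 2 * ∑ w, cond μ R x w * h w ^ 2 :=
            mul_le_mul_of_nonneg_left hvgt (sq_nonneg _)
  rw [hstep1]
  calc ∑ x, μ x * Aop μ R (fun w => (Aop μ T (Aop μ S h) w - Aop μ R h w) ^ 2) x
      ≤ ∑ x, μ x * (((k:ℝ) ^ 2 * ε) ^ 2 * Aop μ R (fun w => h w ^ 2) x) :=
        Finset.sum_le_sum fun x _ => hterm x
    _ = ((k:ℝ) ^ 2 * ε) ^ 2 * ∑ x, μ x * Aop μ R (fun w => h w ^ 2) x := by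
        rw [Finset.mul_sum]
        exact Finset.sum_congr rfl fun x _ => by ring
    _ = ((k:ℝ) ^ 2 * ε) ^ 2 * normSq μ h := by
        rw [show (∑ x, μ x * Aop μ R (fun w => h w ^ 2) x) = normSq μ h from
          expect_Aop hμ.1 R (fun w => h w ^ 2)]

lemma sum_powerset_neg_one_pow_card_real {α : Type*} [DecidableEq α] {x : Finset α} :
    (∑ m ∈ x.powerset, (-1 : ℝ) ^ m.card) = if x = ∅ then 1 else 0 := by
  have h := Finset.sum_powerset_neg_one_pow_card (x := x)
  have h2 : ((∑ m ∈ x.powerset, (-1 : ℤ) ^ m.card : ℤ) : ℝ)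
      = ∑ m ∈ x.powerset, (-1 : ℝ) ^ m.card := by push_cast; rfl
  rw [← h2, h]
  split <;> simp

lemma coeff_sum (T' : Finset (Fin k)) :
    ∑ T ∈ (Finset.univ : Finset (Fin k)).powerset,
        (if T' ⊆ T then (-1:ℝ) ^ (T.card - T'.card) else 0)
      = if T' = Finset.univ then 1 else 0 := by
  rw [Finset.sum_ite, Finset.sum_const_zero, add_zero]
  have hbij : ∑ T ∈ (Finset.univ : Finset (Fin k)).powerset.filter (fun T => T' ⊆ T),
        (-1:ℝ) ^ (T.card - T'.card)
      = ∑ W ∈ ((Finset.univ : Finset (Fin k)) \ T').powerset, (-1:ℝ) ^ W.card := by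
    refine Finset.sum_nbij' (fun T => T \ T') (fun W => T' ∪ W) ?_ ?_ ?_ ?_ ?_
    · intro T hT
      rw [Finset.mem_filter] at hT
      exact Finset.mem_powerset.2
        (Finset.sdiff_subset_sdiff (Finset.mem_powerset.1 hT.1) (le_refl T'))
    · intro W hW
      rw [Finset.mem_filter]
      exact ⟨Finset.mem_powerset.2 (Finset.subset_univ _), Finset.subset_union_left⟩
    · intro T hT
      rw [Finset.mem_filter] at hT
      exact Finset.union_sdiff_of_subset hT.2
    · intro W hW
      refine Finset.union_sdiff_cancel_left ?_
      have hWsub : W ⊆ Finset.univ \ T' := Finset.mem_powerset.1 hW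
      exact Finset.disjoint_left.mpr fun a haT' haW =>
        (Finset.mem_sdiff.1 (hWsub haW)).2 haT'
    · intro T hT
      rw [Finset.mem_filter] at hT
      rw [Finset.card_sdiff_of_subset hT.2]
  rw [hbij, sum_powerset_neg_one_pow_card_real]
  have hiff : ((Finset.univ : Finset (Fin k)) \ T' = ∅) ↔ (T' = Finset.univ) := by
    rw [Finset.sdiff_eq_empty_iff_subset, Finset.univ_subset_iff]
  rw [if_congr hiff rfl rfl]

/-- `∑_{T ⊆ [k]} f^{=T} = A_{[k]} f`. -/
lemma sum_ES_eq (μ : (∀ i, V i) → ℝ) (g : (∀ i, V i) → ℝ) (x : ∀ i, V i) :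
    ∑ T ∈ (Finset.univ : Finset (Fin k)).powerset, ES μ T g x
      = Aop μ Finset.univ g x := by
  unfold ES
  have h1 : ∀ T ∈ (Finset.univ : Finset (Fin k)).powerset,
      (∑ T' ∈ T.powerset, (-1:ℝ) ^ (T.card - T'.card) * Aop μ T' g x)
      = ∑ T' ∈ (Finset.univ : Finset (Fin k)).powerset,
          (if T' ⊆ T then (-1:ℝ) ^ (T.card - T'.card) else 0) * Aop μ T' g x := by
    intro T hT
    rw [← Finset.sum_subset (Finset.powerset_mono.mpr (Finset.mem_powerset.1 hT))
      (fun T' _ hT' => by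
        rw [if_neg (fun hc => hT' (Finset.mem_powerset.2 hc)), zero_mul])]
    exact Finset.sum_congr rfl fun T' hT' => by
      rw [if_pos (Finset.mem_powerset.1 hT')]
  rw [Finset.sum_congr rfl h1, Finset.sum_comm]
  have h2 : ∀ T' ∈ (Finset.univ : Finset (Fin k)).powerset,
      (∑ T ∈ (Finset.univ : Finset (Fin k)).powerset,
        (if T' ⊆ T then (-1:ℝ) ^ (T.card - T'.card) else 0) * Aop μ T' g x)
      = (if T' = Finset.univ then 1 else 0) * Aop μ T' g x := by
    intro T' _
    rw [← Finset.sum_mul, coeff_sum]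
  rw [Finset.sum_congr rfl h2]
  simp only [ite_mul, one_mul, zero_mul]
  rw [Finset.sum_ite_eq' (Finset.univ : Finset (Fin k)).powerset Finset.univ
    (fun T' => Aop μ T' g x)]
  simp [Finset.mem_powerset]

lemma Aop_sum_comm {ν : (∀ i, V i) → ℝ} {ι : Type} (s : Finset ι) (c : ι → ℝ)
    (F : ι → (∀ i, V i) → ℝ) (Q : Finset (Fin k)) (x : ∀ i, V i) :
    Aop ν Q (fun y => ∑ t ∈ s, c t * F t y) x = ∑ t ∈ s, c t * Aop ν Q (F t) x := by
  unfold Aop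
  calc ∑ z, cond ν Q x z * ∑ t ∈ s, c t * F t z
      = ∑ z, ∑ t ∈ s, c t * (cond ν Q x z * F t z) := by
        refine Finset.sum_congr rfl fun z _ => ?_
        rw [Finset.mul_sum]
        exact Finset.sum_congr rfl fun t _ => by ring
    _ = ∑ t ∈ s, ∑ z, c t * (cond ν Q x z * F t z) := Finset.sum_comm
    _ = ∑ t ∈ s, c t * ∑ z, cond ν Q x z * F t z := by
        refine Finset.sum_congr rfl fun t _ => ?_
        rw [Finset.mul_sum]

lemma ES_ES_eq (μ : (∀ i, V i) → ℝ) (S T : Finset (Fin k)) (f : (∀ i, V i) → ℝ)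
    (x : ∀ i, V i) :
    ES μ T (ES μ S f) x = ∑ T' ∈ T.powerset, ∑ S' ∈ S.powerset,
      ((-1:ℝ) ^ (T.card - T'.card) * (-1:ℝ) ^ (S.card - S'.card))
        * Aop μ T' (Aop μ S' f) x := by
  show (∑ T' ∈ T.powerset, (-1:ℝ) ^ (T.card - T'.card) * Aop μ T' (ES μ S f) x) = _
  refine Finset.sum_congr rfl fun T' _ => ?_
  have h1 : Aop μ T' (ES μ S f) x
      = ∑ S' ∈ S.powerset, (-1:ℝ) ^ (S.card - S'.card) * Aop μ T' (Aop μ S' f) x := by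
    have h0 : Aop μ T' (ES μ S f) x
        = Aop μ T' (fun y => ∑ S' ∈ S.powerset,
            (-1:ℝ) ^ (S.card - S'.card) * Aop μ S' f y) x := rfl
    rw [h0, Aop_sum_comm]
  rw [h1, Finset.mul_sum]
  exact Finset.sum_congr rfl fun S' _ => by ring

lemma alt_sum_zero {s : Finset (Fin k)} {i : Fin k} (his : i ∉ s)
    (G : Finset (Fin k) → ℝ) (hG : ∀ A, i ∉ A → G (insert i A) = G A) :
    ∑ T' ∈ (insert i s).powerset,
        (-1:ℝ) ^ ((insert i s).card - T'.card) * G T' = 0 := by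
  rw [Finset.sum_powerset_insert his, ← Finset.sum_add_distrib]
  refine Finset.sum_eq_zero fun A hA => ?_
  have hiA : i ∉ A := fun h => his (Finset.mem_powerset.1 hA h)
  rw [hG A hiA, Finset.card_insert_of_notMem hiA, Finset.card_insert_of_notMem his]
  have hAcard : A.card ≤ s.card := Finset.card_le_card (Finset.mem_powerset.1 hA)
  have hexp : s.card + 1 - A.card = (s.card + 1 - (A.card + 1)) + 1 := by omega
  rw [hexp, pow_succ]
  ring

lemma alt_sum_zero_mem {T : Finset (Fin k)} {i : Fin k} (hiT : i ∈ T)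
    (G : Finset (Fin k) → ℝ) (hG : ∀ A, i ∉ A → G (insert i A) = G A) :
    ∑ T' ∈ T.powerset, (-1:ℝ) ^ (T.card - T'.card) * G T' = 0 := by
  have h := alt_sum_zero (Finset.notMem_erase i T) G hG
  rwa [Finset.insert_erase hiT] at h

lemma double_alt_zero (μ : (∀ i, V i) → ℝ) {S T : Finset (Fin k)} (hTS : T ≠ S)
    (f : (∀ i, V i) → ℝ) (x : ∀ i, V i) :
    ∑ T' ∈ T.powerset, ∑ S' ∈ S.powerset,
      ((-1:ℝ) ^ (T.card - T'.card) * (-1:ℝ) ^ (S.card - S'.card))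
        * Aop μ (S' ∩ T') f x = 0 := by
  by_cases hTsub : T ⊆ S
  · have hSsub : ¬ S ⊆ T := fun h => hTS (Finset.Subset.antisymm hTsub h)
    obtain ⟨i, hiS, hiT⟩ := Finset.not_subset.1 hSsub
    refine Finset.sum_eq_zero fun T' hT' => ?_
    have hiT' : i ∉ T' := fun h => hiT (Finset.mem_powerset.1 hT' h)
    have h := alt_sum_zero_mem hiS
      (fun A => (-1:ℝ) ^ (T.card - T'.card) * Aop μ (A ∩ T') f x)
      (fun A _ => by simp only [Finset.insert_inter_of_notMem hiT'])
    rw [← h]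
    exact Finset.sum_congr rfl fun S' _ => by ring
  · obtain ⟨i, hiT, hiS⟩ := Finset.not_subset.1 hTsub
    rw [Finset.sum_comm]
    refine Finset.sum_eq_zero fun S' hS' => ?_
    have hiS' : i ∉ S' := fun h => hiS (Finset.mem_powerset.1 hS' h)
    have h := alt_sum_zero_mem hiT
      (fun A => (-1:ℝ) ^ (S.card - S'.card) * Aop μ (S' ∩ A) f x)
      (fun A _ => by simp only [Finset.inter_insert_of_notMem hiS'])
    rw [← h]
    exact Finset.sum_congr rfl fun T' _ => by ring

lemma normSq_congr_support {μ a b : (∀ i, V i) → ℝ}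
    (h : ∀ x, μ x ≠ 0 → a x = b x) : normSq μ a = normSq μ b := by
  unfold normSq
  refine Finset.sum_congr rfl fun x _ => ?_
  by_cases hx : μ x = 0
  · rw [hx]; ring
  · rw [h x hx]

lemma normSq_nonneg' {μ : (∀ i, V i) → ℝ} (hμ : ∀ x, 0 ≤ μ x)
    (f : (∀ i, V i) → ℝ) : 0 ≤ normSq μ f :=
  Finset.sum_nonneg fun x _ => mul_nonneg (hμ x) (sq_nonneg _)

lemma sqrt_normSq_sum_le {μ : (∀ i, V i) → ℝ} (hμ : ∀ x, 0 ≤ μ x) {ι : Type}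
    (s : Finset ι) (F : ι → (∀ i, V i) → ℝ) :
    Real.sqrt (normSq μ (fun x => ∑ t ∈ s, F t x))
      ≤ ∑ t ∈ s, Real.sqrt (normSq μ (F t)) := by
  induction s using Finset.cons_induction with
  | empty => simp [normSq]
  | cons a s ha ih =>
    rw [Finset.sum_cons]
    have e : (fun x => ∑ t ∈ Finset.cons a s ha, F t x)
        = fun x => F a x + ∑ t ∈ s, F t x := by
      funext x; rw [Finset.sum_cons]
    rw [e]
    calc Real.sqrt (normSq μ (fun x => F a x + ∑ t ∈ s, F t x))
        ≤ Real.sqrt (normSq μ (F a))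
          + Real.sqrt (normSq μ (fun x => ∑ t ∈ s, F t x)) := norm2_triangle hμ _ _
      _ ≤ Real.sqrt (normSq μ (F a)) + ∑ t ∈ s, Real.sqrt (normSq μ (F t)) :=
          add_le_add (le_refl _) ih

lemma normSq_smul {μ : (∀ i, V i) → ℝ} (c : ℝ) (F : (∀ i, V i) → ℝ) :
    normSq μ (fun x => c * F x) = c ^ 2 * normSq μ F := by
  unfold normSq
  rw [Finset.mul_sum]
  exact Finset.sum_congr rfl fun x _ => by ring

lemma neg_one_pow_mul_sq (a b : ℕ) : (((-1:ℝ) ^ a * (-1:ℝ) ^ b)) ^ 2 = 1 := by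
  rw [mul_pow, ← pow_mul, ← pow_mul, mul_comm a 2, mul_comm b 2, pow_mul, pow_mul]
  norm_num

/-- Part (1) of the theorem. -/
lemma part1 {μ : (∀ i, V i) → ℝ} (hμ : IsProb μ) {ε : ℝ} (hε : 0 ≤ ε)
    (hprod : EpsProduct μ ε) (f : (∀ i, V i) → ℝ) (S T : Finset (Fin k))
    (hTS : T ≠ S) :
    normSq μ (ES μ T (ES μ S f)) ≤ 2 ^ (8 * k) * ε ^ 2 * normSq μ f := by
  have hF0 : 0 ≤ normSq μ f := normSq_nonneg' hμ.1 f
  -- pointwise identity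
  have hfun : ∀ x, ES μ T (ES μ S f) x
      = ∑ T' ∈ T.powerset, ∑ S' ∈ S.powerset,
          ((-1:ℝ) ^ (T.card - T'.card) * (-1:ℝ) ^ (S.card - S'.card))
            * (Aop μ T' (Aop μ S' f) x - Aop μ (S' ∩ T') f x) := by
    intro x
    have h1 := ES_ES_eq μ S T f x
    have h2 := double_alt_zero μ hTS f x
    rw [h1]
    rw [show (∑ T' ∈ T.powerset, ∑ S' ∈ S.powerset,
        ((-1:ℝ) ^ (T.card - T'.card) * (-1:ℝ) ^ (S.card - S'.card))
          * Aop μ T' (Aop μ S' f) x)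
      = (∑ T' ∈ T.powerset, ∑ S' ∈ S.powerset,
          ((-1:ℝ) ^ (T.card - T'.card) * (-1:ℝ) ^ (S.card - S'.card))
            * Aop μ T' (Aop μ S' f) x)
        - ∑ T' ∈ T.powerset, ∑ S' ∈ S.powerset,
          ((-1:ℝ) ^ (T.card - T'.card) * (-1:ℝ) ^ (S.card - S'.card))
            * Aop μ (S' ∩ T') f x from by rw [h2]; ring]
    rw [← Finset.sum_sub_distrib]
    refine Finset.sum_congr rfl fun T' _ => ?_
    rw [← Finset.sum_sub_distrib]
    exact Finset.sum_congr rfl fun S' _ => by ring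
  have hnormeq : normSq μ (ES μ T (ES μ S f))
      = normSq μ (fun x => ∑ T' ∈ T.powerset, ∑ S' ∈ S.powerset,
          ((-1:ℝ) ^ (T.card - T'.card) * (-1:ℝ) ^ (S.card - S'.card))
            * (Aop μ T' (Aop μ S' f) x - Aop μ (S' ∩ T') f x)) :=
    normSq_congr_support fun x _ => hfun x
  -- per-term bound
  have hterm : ∀ (T' S' : Finset (Fin k)),
      Real.sqrt (normSq μ (fun x =>
        ((-1:ℝ) ^ (T.card - T'.card) * (-1:ℝ) ^ (S.card - S'.card))
          * (Aop μ T' (Aop μ S' f) x - Aop μ (S' ∩ T') f x)))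
      ≤ (k:ℝ) ^ 2 * ε * Real.sqrt (normSq μ f) := by
    intro T' S'
    rw [normSq_smul, neg_one_pow_mul_sq, one_mul]
    have h2 := AopAop_bound hμ hε hprod S' T' f
    calc Real.sqrt (normSq μ (fun x => Aop μ T' (Aop μ S' f) x - Aop μ (S' ∩ T') f x))
        ≤ Real.sqrt (((k:ℝ) ^ 2 * ε) ^ 2 * normSq μ f) := Real.sqrt_le_sqrt h2
      _ = (k:ℝ) ^ 2 * ε * Real.sqrt (normSq μ f) := by
          rw [Real.sqrt_mul (sq_nonneg _), Real.sqrt_sq (by positivity)]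
  -- triangle inequality (twice)
  have htri : Real.sqrt (normSq μ (ES μ T (ES μ S f)))
      ≤ (2:ℝ) ^ k * ((2:ℝ) ^ k * ((k:ℝ) ^ 2 * ε * Real.sqrt (normSq μ f))) := by
    rw [hnormeq]
    have h3 := sqrt_normSq_sum_le hμ.1 T.powerset
      (fun T' x => ∑ S' ∈ S.powerset,
        ((-1:ℝ) ^ (T.card - T'.card) * (-1:ℝ) ^ (S.card - S'.card))
          * (Aop μ T' (Aop μ S' f) x - Aop μ (S' ∩ T') f x))
    have h4 : ∀ T' ∈ T.powerset,
        Real.sqrt (normSq μ (fun x => ∑ S' ∈ S.powerset,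
          ((-1:ℝ) ^ (T.card - T'.card) * (-1:ℝ) ^ (S.card - S'.card))
            * (Aop μ T' (Aop μ S' f) x - Aop μ (S' ∩ T') f x)))
        ≤ (2:ℝ) ^ k * ((k:ℝ) ^ 2 * ε * Real.sqrt (normSq μ f)) := by
      intro T' _
      have h5 := sqrt_normSq_sum_le hμ.1 S.powerset
        (fun S' x => ((-1:ℝ) ^ (T.card - T'.card) * (-1:ℝ) ^ (S.card - S'.card))
          * (Aop μ T' (Aop μ S' f) x - Aop μ (S' ∩ T') f x))
      have h6 : ∑ S' ∈ S.powerset, Real.sqrt (normSq μ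
          (fun x => ((-1:ℝ) ^ (T.card - T'.card) * (-1:ℝ) ^ (S.card - S'.card))
            * (Aop μ T' (Aop μ S' f) x - Aop μ (S' ∩ T') f x)))
          ≤ (2:ℝ) ^ k * ((k:ℝ) ^ 2 * ε * Real.sqrt (normSq μ f)) := by
        have hcard : (S.powerset.card : ℝ) ≤ (2:ℝ) ^ k := by
          rw [Finset.card_powerset]
          have : S.card ≤ k := by
            have := Finset.card_le_card (Finset.subset_univ S)
            simpa [Fintype.card_fin] using this
          calc ((2 ^ S.card : ℕ) : ℝ) = (2:ℝ) ^ S.card := by push_cast; ring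
            _ ≤ (2:ℝ) ^ k := by
                exact pow_le_pow_right₀ (by norm_num) this
        calc ∑ S' ∈ S.powerset, Real.sqrt (normSq μ
              (fun x => ((-1:ℝ) ^ (T.card - T'.card) * (-1:ℝ) ^ (S.card - S'.card))
                * (Aop μ T' (Aop μ S' f) x - Aop μ (S' ∩ T') f x)))
            ≤ ∑ _S' ∈ S.powerset, (k:ℝ) ^ 2 * ε * Real.sqrt (normSq μ f) :=
              Finset.sum_le_sum fun S' _ => hterm T' S'
          _ = (S.powerset.card : ℝ) * ((k:ℝ) ^ 2 * ε * Real.sqrt (normSq μ f)) := by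
              rw [Finset.sum_const, nsmul_eq_mul]
          _ ≤ (2:ℝ) ^ k * ((k:ℝ) ^ 2 * ε * Real.sqrt (normSq μ f)) := by
              refine mul_le_mul_of_nonneg_right hcard ?_
              positivity
      exact le_trans h5 h6
    have h7 : ∑ T' ∈ T.powerset, Real.sqrt (normSq μ
        (fun x => ∑ S' ∈ S.powerset,
          ((-1:ℝ) ^ (T.card - T'.card) * (-1:ℝ) ^ (S.card - S'.card))
            * (Aop μ T' (Aop μ S' f) x - Aop μ (S' ∩ T') f x)))
        ≤ (2:ℝ) ^ k * ((2:ℝ) ^ k * ((k:ℝ) ^ 2 * ε * Real.sqrt (normSq μ f))) := by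
      have hcard : (T.powerset.card : ℝ) ≤ (2:ℝ) ^ k := by
        rw [Finset.card_powerset]
        have : T.card ≤ k := by
          have := Finset.card_le_card (Finset.subset_univ T)
          simpa [Fintype.card_fin] using this
        calc ((2 ^ T.card : ℕ) : ℝ) = (2:ℝ) ^ T.card := by push_cast; ring
          _ ≤ (2:ℝ) ^ k := pow_le_pow_right₀ (by norm_num) this
      calc ∑ T' ∈ T.powerset, Real.sqrt (normSq μ
            (fun x => ∑ S' ∈ S.powerset,
              ((-1:ℝ) ^ (T.card - T'.card) * (-1:ℝ) ^ (S.card - S'.card))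
                * (Aop μ T' (Aop μ S' f) x - Aop μ (S' ∩ T') f x)))
          ≤ ∑ _T' ∈ T.powerset,
              (2:ℝ) ^ k * ((k:ℝ) ^ 2 * ε * Real.sqrt (normSq μ f)) :=
            Finset.sum_le_sum h4
        _ = (T.powerset.card : ℝ)
            * ((2:ℝ) ^ k * ((k:ℝ) ^ 2 * ε * Real.sqrt (normSq μ f))) := by
            rw [Finset.sum_const, nsmul_eq_mul]
        _ ≤ (2:ℝ) ^ k * ((2:ℝ) ^ k * ((k:ℝ) ^ 2 * ε * Real.sqrt (normSq μ f))) := by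
            refine mul_le_mul_of_nonneg_right hcard ?_
            positivity
    exact le_trans h3 h7
  -- square both sides
  have hL0 : 0 ≤ normSq μ (ES μ T (ES μ S f)) := normSq_nonneg' hμ.1 _
  have hsq := sq_of_sqrt_le hL0 htri
  have hkk : (k:ℝ) ≤ (2:ℝ) ^ k := by
    calc (k:ℝ) ≤ ((2 ^ k : ℕ) : ℝ) := by exact_mod_cast (Nat.lt_two_pow_self (n := k)).le
      _ = (2:ℝ) ^ k := by push_cast; ring
  have hk0 : (0:ℝ) ≤ (k:ℝ) := Nat.cast_nonneg k
  have hexp : ((2:ℝ) ^ k * ((2:ℝ) ^ k * ((k:ℝ) ^ 2 * ε * Real.sqrt (normSq μ f)))) ^ 2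
      = ((2:ℝ) ^ (4 * k) * (k:ℝ) ^ 4) * (ε ^ 2 * normSq μ f) := by
    have h8 : Real.sqrt (normSq μ f) ^ 2 = normSq μ f := Real.sq_sqrt hF0
    have h9 : ((2:ℝ) ^ k) ^ 4 = (2:ℝ) ^ (4 * k) := by
      rw [← pow_mul]; congr 1; omega
    calc ((2:ℝ) ^ k * ((2:ℝ) ^ k * ((k:ℝ) ^ 2 * ε * Real.sqrt (normSq μ f)))) ^ 2
        = ((2:ℝ) ^ k) ^ 4 * (k:ℝ) ^ 4 * (ε ^ 2 * Real.sqrt (normSq μ f) ^ 2) := by ring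
      _ = ((2:ℝ) ^ (4 * k) * (k:ℝ) ^ 4) * (ε ^ 2 * normSq μ f) := by rw [h9, h8]; try ring
  have hcoef : (2:ℝ) ^ (4 * k) * (k:ℝ) ^ 4 ≤ (2:ℝ) ^ (8 * k) := by
    have h10 : (k:ℝ) ^ 4 ≤ ((2:ℝ) ^ k) ^ 4 := pow_le_pow_left₀ hk0 hkk 4
    have h11 : ((2:ℝ) ^ k) ^ 4 = (2:ℝ) ^ (4 * k) := by rw [← pow_mul]; congr 1; omega
    have h12 : (2:ℝ) ^ (4 * k) * (2:ℝ) ^ (4 * k) = (2:ℝ) ^ (8 * k) := by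
      rw [← pow_add]; congr 1; omega
    calc (2:ℝ) ^ (4 * k) * (k:ℝ) ^ 4 ≤ (2:ℝ) ^ (4 * k) * (2:ℝ) ^ (4 * k) := by
          refine mul_le_mul_of_nonneg_left ?_ (by positivity)
          rw [← h11]; exact h10
      _ = (2:ℝ) ^ (8 * k) := h12
  calc normSq μ (ES μ T (ES μ S f))
      ≤ ((2:ℝ) ^ k * ((2:ℝ) ^ k * ((k:ℝ) ^ 2 * ε * Real.sqrt (normSq μ f)))) ^ 2 := hsq
    _ = ((2:ℝ) ^ (4 * k) * (k:ℝ) ^ 4) * (ε ^ 2 * normSq μ f) := hexp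
    _ ≤ (2:ℝ) ^ (8 * k) * (ε ^ 2 * normSq μ f) := by
        refine mul_le_mul_of_nonneg_right hcoef ?_
        positivity
    _ = 2 ^ (8 * k) * ε ^ 2 * normSq μ f := by ring

/-- Part (2) of the theorem. -/
lemma part2 {μ : (∀ i, V i) → ℝ} (hμ : IsProb μ) {ε : ℝ} (hε : 0 ≤ ε)
    (hprod : EpsProduct μ ε) (f : (∀ i, V i) → ℝ) (S : Finset (Fin k)) :
    normSq μ (fun x => ES μ S (ES μ S f) x - ES μ S f x)
      ≤ 2 ^ (10 * k) * ε ^ 2 * normSq μ f := by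
  have hF0 : 0 ≤ normSq μ f := normSq_nonneg' hμ.1 f
  have hsupp : ∀ x, μ x ≠ 0 → ES μ S (ES μ S f) x - ES μ S f x
      = ∑ T ∈ ((Finset.univ : Finset (Fin k)).powerset).erase S,
          -(ES μ T (ES μ S f) x) := by
    intro x hx
    have h1 : ∑ T ∈ (Finset.univ : Finset (Fin k)).powerset, ES μ T (ES μ S f) x
        = ES μ S f x := by
      rw [sum_ES_eq]
      exact Aop_univ hx (ES μ S f)
    have h2 : ES μ S (ES μ S f) x
        + ∑ T ∈ ((Finset.univ : Finset (Fin k)).powerset).erase S, ES μ T (ES μ S f) x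
        = ∑ T ∈ (Finset.univ : Finset (Fin k)).powerset, ES μ T (ES μ S f) x :=
      Finset.add_sum_erase _ (fun T => ES μ T (ES μ S f) x)
        (Finset.mem_powerset.2 (Finset.subset_univ S))
    have h3 : ∑ T ∈ ((Finset.univ : Finset (Fin k)).powerset).erase S,
        -(ES μ T (ES μ S f) x)
        = -∑ T ∈ ((Finset.univ : Finset (Fin k)).powerset).erase S,
            ES μ T (ES μ S f) x := by
      rw [Finset.sum_neg_distrib]
    rw [h3]
    linarith [h1, h2]
  have hnormeq : normSq μ (fun x => ES μ S (ES μ S f) x - ES μ S f x)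
      = normSq μ (fun x => ∑ T ∈ ((Finset.univ : Finset (Fin k)).powerset).erase S,
          -(ES μ T (ES μ S f) x)) :=
    normSq_congr_support hsupp
  have hterm : ∀ T ∈ ((Finset.univ : Finset (Fin k)).powerset).erase S,
      Real.sqrt (normSq μ (fun x => -(ES μ T (ES μ S f) x)))
      ≤ (2:ℝ) ^ (4 * k) * ε * Real.sqrt (normSq μ f) := by
    intro T hT
    have hTne : T ≠ S := (Finset.mem_erase.1 hT).1
    have h1 : normSq μ (fun x => -(ES μ T (ES μ S f) x)) = normSq μ (ES μ T (ES μ S f)) := by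
      unfold normSq
      exact Finset.sum_congr rfl fun x _ => by ring
    rw [h1]
    have h2 := part1 hμ hε hprod f S T hTne
    have h3 : (2:ℝ) ^ (8 * k) * ε ^ 2 * normSq μ f
        = ((2:ℝ) ^ (4 * k) * ε) ^ 2 * normSq μ f := by
      rw [mul_pow, ← pow_mul]
      rw [show 4 * k * 2 = 8 * k by omega]
    calc Real.sqrt (normSq μ (ES μ T (ES μ S f)))
        ≤ Real.sqrt ((2:ℝ) ^ (8 * k) * ε ^ 2 * normSq μ f) := Real.sqrt_le_sqrt h2
      _ = (2:ℝ) ^ (4 * k) * ε * Real.sqrt (normSq μ f) := by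
          rw [h3, Real.sqrt_mul (sq_nonneg _), Real.sqrt_sq (by positivity)]
  have hcard : ((((Finset.univ : Finset (Fin k)).powerset).erase S).card : ℝ)
      ≤ (2:ℝ) ^ k := by
    have h1 : (((Finset.univ : Finset (Fin k)).powerset).erase S).card
        ≤ ((Finset.univ : Finset (Fin k)).powerset).card :=
      Finset.card_le_card (Finset.erase_subset _ _)
    have h2 : ((Finset.univ : Finset (Fin k)).powerset).card = 2 ^ k := by
      rw [Finset.card_powerset, Finset.card_univ, Fintype.card_fin]
    calc ((((Finset.univ : Finset (Fin k)).powerset).erase S).card : ℝ)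
        ≤ ((2 ^ k : ℕ) : ℝ) := by exact_mod_cast h2 ▸ h1
      _ = (2:ℝ) ^ k := by push_cast; ring
  have htri : Real.sqrt (normSq μ (fun x => ES μ S (ES μ S f) x - ES μ S f x))
      ≤ (2:ℝ) ^ k * ((2:ℝ) ^ (4 * k) * ε * Real.sqrt (normSq μ f)) := by
    rw [hnormeq]
    have h3 := sqrt_normSq_sum_le hμ.1 (((Finset.univ : Finset (Fin k)).powerset).erase S)
      (fun T x => -(ES μ T (ES μ S f) x))
    calc Real.sqrt (normSq μ (fun x =>
          ∑ T ∈ ((Finset.univ : Finset (Fin k)).powerset).erase S,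
            -(ES μ T (ES μ S f) x)))
        ≤ ∑ T ∈ ((Finset.univ : Finset (Fin k)).powerset).erase S,
            Real.sqrt (normSq μ (fun x => -(ES μ T (ES μ S f) x))) := h3
      _ ≤ ∑ _T ∈ ((Finset.univ : Finset (Fin k)).powerset).erase S,
            (2:ℝ) ^ (4 * k) * ε * Real.sqrt (normSq μ f) :=
          Finset.sum_le_sum hterm
      _ = ((((Finset.univ : Finset (Fin k)).powerset).erase S).card : ℝ)
          * ((2:ℝ) ^ (4 * k) * ε * Real.sqrt (normSq μ f)) := by
          rw [Finset.sum_const, nsmul_eq_mul]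
      _ ≤ (2:ℝ) ^ k * ((2:ℝ) ^ (4 * k) * ε * Real.sqrt (normSq μ f)) := by
          refine mul_le_mul_of_nonneg_right hcard ?_
          positivity
  have hL0 : 0 ≤ normSq μ (fun x => ES μ S (ES μ S f) x - ES μ S f x) :=
    normSq_nonneg' hμ.1 _
  have hsq := sq_of_sqrt_le hL0 htri
  have hexp : ((2:ℝ) ^ k * ((2:ℝ) ^ (4 * k) * ε * Real.sqrt (normSq μ f))) ^ 2
      = (2:ℝ) ^ (10 * k) * ε ^ 2 * normSq μ f := by
    have h8 : Real.sqrt (normSq μ f) ^ 2 = normSq μ f := Real.sq_sqrt hF0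
    have h9 : ((2:ℝ) ^ k) ^ 2 * ((2:ℝ) ^ (4 * k)) ^ 2 = (2:ℝ) ^ (10 * k) := by
      rw [← pow_mul, ← pow_mul, ← pow_add]
      congr 1; omega
    calc ((2:ℝ) ^ k * ((2:ℝ) ^ (4 * k) * ε * Real.sqrt (normSq μ f))) ^ 2
        = ((2:ℝ) ^ k) ^ 2 * ((2:ℝ) ^ (4 * k)) ^ 2 * (ε ^ 2 * Real.sqrt (normSq μ f) ^ 2) := by
          ring
      _ = 2 ^ (10 * k) * ε ^ 2 * normSq μ f := by rw [h9, h8]; try ring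
  calc normSq μ (fun x => ES μ S (ES μ S f) x - ES μ S f x)
      ≤ ((2:ℝ) ^ k * ((2:ℝ) ^ (4 * k) * ε * Real.sqrt (normSq μ f))) ^ 2 := hsq
    _ = 2 ^ (10 * k) * ε ^ 2 * normSq μ f := hexp

theorem statement16 (k : ℕ) (hk : 1 ≤ k)
    (V : Fin k → Type) [∀ i, Fintype (V i)] [∀ i, DecidableEq (V i)]
    (μ : (∀ i, V i) → ℝ) (ε : ℝ) (hε : 0 ≤ ε) (hμ : IsProb μ) (hprod : EpsProduct μ ε)
    (f : (∀ i, V i) → ℝ) (S : Finset (Fin k)) :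
    (∀ T : Finset (Fin k), T ≠ S →
        normSq μ (ES μ T (ES μ S f)) ≤ 2 ^ (8 * k) * ε ^ 2 * normSq μ f) ∧
      normSq μ (fun x => ES μ S (ES μ S f) x - ES μ S f x) ≤
        2 ^ (10 * k) * ε ^ 2 * normSq μ f := by
  constructor
  · intro T hTS
    exact part1 hμ hε hprod f S T hTS
  · exact part2 hμ hε hprod f S

end GLL
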